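/- arXiv:2007.10094 — 8 statements merged into one kernel-verified Lean document; each statement's English description precedes it below -/
import Mathlib

section
/- Let G be a finite abelian group, and let U_1, …, U_r, V_1, …, V_s be minimal zero-sum sequences over a subset G_0 ⊆ G with U_1 ⋯ U_r = V_1 ⋯ V_s (product in the free abelian monoid on G_0). If G_0 ⊆ {−g, g} for an element g of order n, then n − 2 divides s − r. -/
def IsMinZeroSum {G : Type*} [AddCommGroup G] (S : Multiset G) : Prop :=
  S ≠ 0 ∧ S.sum = 0 ∧ ∀ T : Multiset G, T ≤ S → T ≠ 0 → T ≠ S → T.sum ≠ 0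

lemma min_rep {G : Type*} [AddCommGroup G] (g : G) (n : ℕ) (hn : 0 < n)
    (hg : addOrderOf g = n) (S : Multiset G) (hmin : IsMinZeroSum S) (a : ℕ)
    (hS : S = Multiset.replicate a g) : S = Multiset.replicate n g := by
  obtain ⟨hne, hsum, hminT⟩ := hmin
  have ha : n ∣ a := by
    rw [← hg]
    rw [addOrderOf_dvd_iff_nsmul_eq_zero]
    rw [hS, Multiset.sum_replicate] at hsum
    exact hsum
  have ha0 : a ≠ 0 := by
    rintro rfl
    simp at hS
    exact hne hS
  have hna : n ≤ a := Nat.le_of_dvd (Nat.pos_of_ne_zero ha0) ha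
  have hle : Multiset.replicate n g ≤ S := by
    rw [hS]; exact Multiset.replicate_le_replicate g |>.2 hna
  have hTsum : (Multiset.replicate n g).sum = 0 := by
    rw [Multiset.sum_replicate, ← hg]; exact addOrderOf_nsmul_eq_zero g
  have hT0 : Multiset.replicate n g ≠ 0 := by
    intro h
    have := congrArg Multiset.card h
    simp at this
    omega
  by_contra h
  exact hminT _ hle hT0 (fun he => h he.symm) hTsum

lemma classify {G : Type*} [AddCommGroup G] (g : G) (n : ℕ) (hn : 0 < n)
    (hg : addOrderOf g = n) (hne : g ≠ -g) (S : Multiset G) (hmin : IsMinZeroSum S)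
    (hmem : ∀ x ∈ S, x = -g ∨ x = g) :
    S = Multiset.replicate n g ∨ S = Multiset.replicate n (-g) ∨ S = {g, -g} := by
  classical
  have hne' : (-g : G) ≠ g := Ne.symm hne
  set a := S.count g with hA
  set b := S.count (-g) with hB
  have hrep : S = Multiset.replicate a g + Multiset.replicate b (-g) := by
    ext x
    rw [Multiset.count_add, Multiset.count_replicate, Multiset.count_replicate]
    rcases eq_or_ne g x with hx | hx
    · rw [if_pos hx, if_neg (fun h : -g = x => hne (hx.trans h.symm)), add_zero, ← hx]
    · rw [if_neg hx]
      rcases eq_or_ne (-g) x with hx' | hx'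
      · rw [if_pos hx', zero_add, ← hx']
      · rw [if_neg hx', add_zero, Multiset.count_eq_zero]
        intro hxS
        rcases hmem x hxS with h | h
        · exact hx' h.symm
        · exact hx h.symm
  rcases Nat.eq_zero_or_pos b with hb | hb
  · left
    refine min_rep g n hn hg S hmin a ?_
    rw [hrep, hb]; simp
  · rcases Nat.eq_zero_or_pos a with ha | ha
    · right; left
      refine min_rep (-g) n hn (by rwa [addOrderOf_neg]) S hmin b ?_
      rw [hrep, ha]; simp
    · right; right
      obtain ⟨hne0, hsum, hminT⟩ := hmin
      have c1 : Multiset.count g ({g, -g} : Multiset G) = 1 := by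
        simp [Multiset.count_cons, Multiset.count_singleton, hne]
      have c2 : Multiset.count (-g) ({g, -g} : Multiset G) = 1 := by
        simp [Multiset.count_cons, Multiset.count_singleton, hne']
      have hle : ({g, -g} : Multiset G) ≤ S := by
        rw [Multiset.le_iff_count]
        intro x
        rcases eq_or_ne x g with hx | hx
        · rw [hx, c1]; omega
        · rcases eq_or_ne x (-g) with hx' | hx'
          · rw [hx', c2]; omega
          · have : Multiset.count x ({g, -g} : Multiset G) = 0 := by
              simp [Multiset.count_cons, Multiset.count_singleton, hx, hx']
            rw [this]; omega
      have hTsum : ({g, -g} : Multiset G).sum = 0 := by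
        simp
      have hT0 : ({g, -g} : Multiset G) ≠ 0 := by
        simp
      by_contra h
      exact hminT _ hle hT0 (fun he => h he.symm) hTsum

lemma key {G : Type*} [AddCommGroup G] [DecidableEq G] (g : G) (n : ℕ) (hn : 0 < n)
    (hg : addOrderOf g = n) (hne : g ≠ -g) (S : Multiset G) (hmin : IsMinZeroSum S)
    (hmem : ∀ x ∈ S, x = -g ∨ x = g) :
    ∃ x y z : ℤ, x + y + z = 1 ∧ ((S.count g : ℤ) = n * x + z) ∧
      ((S.count (-g) : ℤ) = n * y + z) := by
  have hne' : (-g : G) ≠ g := Ne.symm hne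
  rcases classify g n hn hg hne S hmin hmem with h | h | h
  · refine ⟨1, 0, 0, by ring, ?_, ?_⟩
    · rw [h, Multiset.count_replicate_self]; push_cast; ring
    · rw [h, Multiset.count_replicate, if_neg hne]; ring
  · refine ⟨0, 1, 0, by ring, ?_, ?_⟩
    · rw [h, Multiset.count_replicate, if_neg hne']; ring
    · rw [h, Multiset.count_replicate_self]; push_cast; ring
  · refine ⟨0, 0, 1, by ring, ?_, ?_⟩
    · have : Multiset.count g ({g, -g} : Multiset G) = 1 := by
        simp [Multiset.count_cons, Multiset.count_singleton, hne]
      rw [h, this]; push_cast; ring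
    · have : Multiset.count (-g) ({g, -g} : Multiset G) = 1 := by
        simp [Multiset.count_cons, Multiset.count_singleton, hne']
      rw [h, this]; push_cast; ring

theorem stmt_1 {G : Type*} [AddCommGroup G] [Fintype G] (G₀ : Set G) (g : G) (n : ℕ)
    (hg : addOrderOf g = n) (hG₀ : G₀ ⊆ {-g, g})
    (r s : ℕ) (U : Fin r → Multiset G) (V : Fin s → Multiset G)
    (hU : ∀ i, IsMinZeroSum (U i) ∧ ∀ x ∈ U i, x ∈ G₀)
    (hV : ∀ j, IsMinZeroSum (V j) ∧ ∀ x ∈ V j, x ∈ G₀)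
    (heq : (∑ i, U i) = (∑ j, V j)) :
    ((n : ℤ) - 2) ∣ ((s : ℤ) - (r : ℤ)) := by
  classical
  have hn : 0 < n := hg ▸ addOrderOf_pos g
  have hmemU : ∀ i, ∀ x ∈ U i, x = -g ∨ x = g := by
    intro i x hx
    have := hG₀ ((hU i).2 x hx)
    simpa [Set.mem_insert_iff] using this
  have hmemV : ∀ j, ∀ x ∈ V j, x = -g ∨ x = g := by
    intro j x hx
    have := hG₀ ((hV j).2 x hx)
    simpa [Set.mem_insert_iff] using this
  rcases eq_or_ne g (-g) with hgg | hgg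
  · -- g = -g : every atom is replicate n g, hence r = s
    have hrepU : ∀ i, U i = Multiset.replicate n g := by
      intro i
      refine min_rep g n hn hg (U i) (hU i).1 (Multiset.card (U i)) ?_
      rw [Multiset.eq_replicate_card]
      intro x hx
      rcases hmemU i x hx with h | h
      · rw [h, ← hgg]
      · exact h
    have hrepV : ∀ j, V j = Multiset.replicate n g := by
      intro j
      refine min_rep g n hn hg (V j) (hV j).1 (Multiset.card (V j)) ?_
      rw [Multiset.eq_replicate_card]
      intro x hx
      rcases hmemV j x hx with h | h
      · rw [h, ← hgg]
      · exact h
    have hc := congrArg (Multiset.count g) heq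
    rw [Multiset.count_sum', Multiset.count_sum'] at hc
    simp only [hrepU, hrepV, Multiset.count_replicate_self, Finset.sum_const,
      Finset.card_univ, Fintype.card_fin, smul_eq_mul] at hc
    have hrs : r = s := Nat.eq_of_mul_eq_mul_right hn hc
    rw [hrs]
    simp
  · -- g ≠ -g : classify atoms
    choose xu yu zu hxyzU hcgU hcngU using fun i =>
      key g n hn hg hgg (U i) (hU i).1 (hmemU i)
    choose xv yv zv hxyzV hcgV hcngV using fun j =>
      key g n hn hg hgg (V j) (hV j).1 (hmemV j)
    set XU := ∑ i, xu i
    set YU := ∑ i, yu i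
    set ZU := ∑ i, zu i
    set XV := ∑ j, xv j
    set YV := ∑ j, yv j
    set ZV := ∑ j, zv j
    have h1 : (n : ℤ) * XU + ZU = n * XV + ZV := by
      have h := congrArg (Multiset.count g) heq
      rw [Multiset.count_sum', Multiset.count_sum'] at h
      have h' : (∑ i, ((U i).count g : ℤ)) = ∑ j, ((V j).count g : ℤ) := by
        exact_mod_cast h
      simp only [hcgU, hcgV, Finset.sum_add_distrib, ← Finset.mul_sum] at h'
      exact h'
    have h2 : (n : ℤ) * YU + ZU = n * YV + ZV := by
      have h := congrArg (Multiset.count (-g)) heq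
      rw [Multiset.count_sum', Multiset.count_sum'] at h
      have h' : (∑ i, ((U i).count (-g) : ℤ)) = ∑ j, ((V j).count (-g) : ℤ) := by
        exact_mod_cast h
      simp only [hcngU, hcngV, Finset.sum_add_distrib, ← Finset.mul_sum] at h'
      exact h'
    have hr : (r : ℤ) = XU + YU + ZU := by
      have h : ∑ i : Fin r, (xu i + yu i + zu i) = ∑ _i : Fin r, (1 : ℤ) :=
        Finset.sum_congr rfl fun i _ => hxyzU i
      simp only [Finset.sum_add_distrib, Finset.sum_const, Finset.card_univ,
        Fintype.card_fin, nsmul_eq_mul, mul_one] at h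
      omega
    have hs : (s : ℤ) = XV + YV + ZV := by
      have h : ∑ j : Fin s, (xv j + yv j + zv j) = ∑ _j : Fin s, (1 : ℤ) :=
        Finset.sum_congr rfl fun j _ => hxyzV j
      simp only [Finset.sum_add_distrib, Finset.sum_const, Finset.card_univ,
        Fintype.card_fin, nsmul_eq_mul, mul_one] at h
      omega
    have hy : YU - YV - XU + XV = 0 := by
      have hn0 : (n : ℤ) ≠ 0 := by exact_mod_cast hn.ne'
      have : (n : ℤ) * (YU - YV - XU + XV) = 0 := by ring_nf; linarith [h1, h2]
      rcases mul_eq_zero.1 this with h | h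
      · exact absurd h hn0
      · exact h
    exact ⟨XU - XV, by linear_combination hs - hr - h1 - hy⟩
end

section
/- Let G be an elementary 2-group of rank r ≥ 2, i.e., G ≅ C_2^r. Then D(G) = r + 1, and for any minimal zero-sum sequences U_1, …, U_k, V_1, …, V_m over G all of whose terms lie in the support of some fixed minimal zero-sum sequence U of length r+1, the equality U_1 ⋯ U_k = V_1 ⋯ V_m implies that r − 1 divides m − k. -/
noncomputable def Dav (G : Type*) [AddCommGroup G] [Fintype G] : ℕ :=
  sSup {n : ℕ | ∃ S : Multiset G, IsMinZeroSum S ∧ Multiset.card S = n}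


lemma repl_le {G : Type*} [DecidableEq G] {S : Multiset G} {a : G} (h : 2 ≤ S.count a) :
    Multiset.replicate 2 a ≤ S := by
  rw [Multiset.le_iff_count]
  intro b
  rcases eq_or_ne b a with rfl | hb
  · simpa using h
  · simp [Multiset.count_replicate, hb]

lemma minZeroSum_nodup {G : Type*} [AddCommGroup G] (htwo : ∀ g : G, g + g = 0)
    {S : Multiset G} (hS : IsMinZeroSum S) (h3 : 3 ≤ Multiset.card S) : S.Nodup := by
  classical
  rw [Multiset.nodup_iff_count_le_one]
  intro a
  by_contra h
  push_neg at h
  have hle : Multiset.replicate 2 a ≤ S := repl_le h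
  refine hS.2.2 _ hle (by simp) ?_ ?_
  · intro hEq
    have := congrArg Multiset.card hEq
    simp [Multiset.card_replicate] at this
    omega
  · rw [Multiset.sum_replicate, two_nsmul]
    exact htwo a

lemma classify_s2 {G : Type*} [AddCommGroup G] (htwo : ∀ g : G, g + g = 0)
    {U W : Multiset G} (hU : IsMinZeroSum U) (h3 : 3 ≤ Multiset.card U)
    (hndU : U.Nodup) (hW : IsMinZeroSum W) (hsub : ∀ x ∈ W, x ∈ U) :
    (∃ g ∈ U, W = Multiset.replicate 2 g) ∨ W = U := by
  classical
  by_cases h : ∃ g, 2 ≤ W.count g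
  · obtain ⟨g, hg⟩ := h
    have hle : Multiset.replicate 2 g ≤ W := repl_le hg
    have hsum : (Multiset.replicate 2 g).sum = 0 := by
      rw [Multiset.sum_replicate, two_nsmul]; exact htwo g
    have hgW : g ∈ W := by
      rw [← Multiset.count_pos]; omega
    have : Multiset.replicate 2 g = W := by
      by_contra hne
      exact hW.2.2 _ hle (by simp) hne hsum
    exact Or.inl ⟨g, hsub g hgW, this.symm⟩
  · push_neg at h
    have hnd : W.Nodup := Multiset.nodup_iff_count_le_one.2 (fun a => by have := h a; omega)
    have hle : W ≤ U := by
      rw [Multiset.le_iff_count]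
      intro a
      by_cases ha : a ∈ W
      · calc W.count a ≤ 1 := by have := h a; omega
          _ ≤ U.count a := Multiset.count_pos.2 (hsub a ha)
      · simp [Multiset.count_eq_zero_of_notMem ha]
    right
    by_contra hne
    exact hU.2.2 _ hle hW.1 hne hW.2.1


lemma htwo_pi {r : ℕ} (g : Fin r → ZMod 2) : g + g = 0 := by
  funext j
  exact CharTwo.add_self_eq_zero (g j)

lemma card_le_aux (r : ℕ) (hr : 2 ≤ r) {S : Multiset (Fin r → ZMod 2)}
    (hS : IsMinZeroSum S) : Multiset.card S ≤ r + 1 := by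
  classical
  by_contra hcon
  push_neg at hcon
  have h3 : 3 ≤ Multiset.card S := by omega
  have hnd : S.Nodup := minZeroSum_nodup htwo_pi hS h3
  obtain ⟨s₀, hs₀⟩ := Multiset.exists_mem_of_ne_zero hS.1
  set F : Finset (Fin r → ZMod 2) := S.toFinset with hF
  have hFval : F.val = S := by rw [hF, Multiset.toFinset_val, Multiset.dedup_eq_self.2 hnd]
  have hs₀F : s₀ ∈ F := Multiset.mem_toFinset.2 hs₀
  set t : Finset (Fin r → ZMod 2) := F.erase s₀ with ht
  have hcardF : F.card = Multiset.card S := by rw [Finset.card_def, hFval]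
  have hcardt : t.card = Multiset.card S - 1 := by
    rw [ht, Finset.card_erase_of_mem hs₀F, hcardF]
  -- injectivity of subset-sum on powerset of t
  have hinj : Set.InjOn (fun A : Finset (Fin r → ZMod 2) => A.sum id) ↑t.powerset := by
    intro A hA B hB hAB
    simp only [Finset.coe_powerset, Set.mem_preimage, Set.mem_powerset_iff,
      Finset.coe_subset, Finset.mem_coe, Finset.mem_powerset] at hA hB
    by_contra hne
    set D : Finset (Fin r → ZMod 2) := (A \ B) ∪ (B \ A) with hD
    have hDsub : D ⊆ t := by
      intro x hx
      rw [hD, Finset.mem_union] at hx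
      rcases hx with hx | hx
      · exact hA (Finset.mem_sdiff.1 hx).1
      · exact hB (Finset.mem_sdiff.1 hx).1
    have hDne : D ≠ ∅ := by
      intro hDe
      apply hne
      rw [hD, Finset.union_eq_empty, Finset.sdiff_eq_empty_iff_subset,
        Finset.sdiff_eq_empty_iff_subset] at hDe
      exact Finset.Subset.antisymm hDe.1 hDe.2
    have hDsum : D.sum id = 0 := by
      have hdisj : Disjoint (A \ B) (B \ A) := disjoint_sdiff_sdiff
      rw [hD, Finset.sum_union hdisj]
      have e1 : (A \ B).sum id = A.sum id - (A ∩ B).sum id := by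
        rw [← Finset.sdiff_inter_self_left A B]
        exact Finset.sum_sdiff_eq_sub Finset.inter_subset_left
      have e2 : (B \ A).sum id = B.sum id - (B ∩ A).sum id := by
        rw [← Finset.sdiff_inter_self_left B A]
        exact Finset.sum_sdiff_eq_sub Finset.inter_subset_left
      have hAB' : A.sum id = B.sum id := hAB
      rw [e1, e2, Finset.inter_comm B A, hAB']
      exact htwo_pi _
    -- D.val is a proper nonzero zero-sum subsequence of S
    have hDleS : D.val ≤ S := by
      rw [← hFval]
      exact Finset.val_le_iff.2 (hDsub.trans (Finset.erase_subset _ _))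
    have hDv0 : D.val ≠ 0 := by
      simpa [Finset.val_eq_zero] using hDne
    have hDvS : D.val ≠ S := by
      intro hEq
      have : s₀ ∈ D.val := by rw [hEq]; exact hs₀
      have hs₀D : s₀ ∈ D := this
      have : s₀ ∈ t := hDsub hs₀D
      exact (Finset.notMem_erase s₀ F) this
    have : D.val.sum ≠ 0 := hS.2.2 _ hDleS hDv0 hDvS
    apply this
    rw [← hDsum]
    show D.val.sum = (Multiset.map id D.val).sum
    rw [Multiset.map_id]
  have hcard : t.powerset.card ≤ Fintype.card (Fin r → ZMod 2) := by
    have := Finset.card_le_card_of_injOn (fun A : Finset (Fin r → ZMod 2) => A.sum id)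
      (fun A _ => Finset.mem_univ _) hinj
    simpa using this
  rw [Finset.card_powerset, hcardt] at hcard
  have hcardG : Fintype.card (Fin r → ZMod 2) = 2 ^ r := by
    simp [Fintype.card_fun]
  rw [hcardG] at hcard
  have := (Nat.pow_le_pow_iff_right (by norm_num : 1 < 2)).1 hcard
  omega



lemma exists_max (r : ℕ) (hr : 2 ≤ r) :
    ∃ S : Multiset (Fin r → ZMod 2), IsMinZeroSum S ∧ Multiset.card S = r + 1 := by
  classical
  set e : Fin r → (Fin r → ZMod 2) := fun i => Pi.single i 1 with he_def
  set f : Fin r → ZMod 2 := fun _ => 1 with hf_def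
  have hone : (1 : ZMod 2) ≠ 0 := one_ne_zero
  have he : Function.Injective e := by
    intro i i' h
    by_contra hne
    have := congrFun h i
    simp [he_def, Pi.single_apply, Ne.symm hne] at this
  have hNT : Nontrivial (Fin r) := Fin.nontrivial_iff_two_le.2 hr
  have hfe : ∀ i, f ≠ e i := by
    intro i hEq
    obtain ⟨j, hj⟩ := exists_ne i
    have := congrFun hEq j
    simp [hf_def, he_def, Pi.single_apply, hj] at this
  set S₀ : Multiset (Fin r → ZMod 2) := f ::ₘ Finset.univ.val.map e with hS₀
  have hcard : Multiset.card S₀ = r + 1 := by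
    simp [hS₀]
  have hsum0 : S₀.sum = 0 := by
    rw [hS₀, Multiset.sum_cons]
    have : (Finset.univ.val.map e).sum = ∑ i, e i := rfl
    rw [this]
    have h1 : ∑ i, e i = f := by
      rw [he_def]
      exact Finset.univ_sum_single f
    rw [h1]
    exact htwo_pi f
  have hnd : S₀.Nodup := by
    rw [hS₀, Multiset.nodup_cons]
    constructor
    · intro hmem
      obtain ⟨i, _, hi⟩ := Multiset.mem_map.1 hmem
      exact hfe i hi.symm
    · exact Multiset.Nodup.map he Finset.univ.nodup
  set F₀ : Finset (Fin r → ZMod 2) := S₀.toFinset with hF₀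
  have hF₀val : F₀.val = S₀ := by rw [hF₀, Multiset.toFinset_val, Multiset.dedup_eq_self.2 hnd]
  have hmemF₀ : ∀ g ∈ F₀, g = f ∨ ∃ i, g = e i := by
    intro g hg
    rw [hF₀, Multiset.mem_toFinset, hS₀, Multiset.mem_cons] at hg
    rcases hg with hg | hg
    · exact Or.inl hg
    · obtain ⟨i, _, hi⟩ := Multiset.mem_map.1 hg
      exact Or.inr ⟨i, hi.symm⟩
  have heF₀ : ∀ i, e i ∈ F₀ := by
    intro i
    rw [hF₀, Multiset.mem_toFinset, hS₀, Multiset.mem_cons]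
    exact Or.inr (Multiset.mem_map.2 ⟨i, by simp, rfl⟩)
  have hfF₀ : f ∈ F₀ := by
    rw [hF₀, Multiset.mem_toFinset, hS₀]
    exact Multiset.mem_cons_self f _
  -- key coordinate computation
  have hkey : ∀ A : Finset (Fin r → ZMod 2), A ⊆ F₀ → ∀ i : Fin r,
      (A.sum id) i = (if e i ∈ A then 1 else 0) + (if f ∈ A then 1 else 0) := by
    intro A hA i
    rw [Finset.sum_apply]
    have hpt : ∀ g ∈ A, (id g) i = (if g = e i then (1:ZMod 2) else 0) + (if g = f then 1 else 0) := by
      intro g hg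
      rcases hmemF₀ g (hA hg) with rfl | ⟨i', rfl⟩
      · simp only [id_eq, if_neg (hfe i), if_pos rfl, zero_add]
        rfl
      · have h1 : (e i') i = if i = i' then (1:ZMod 2) else 0 := by
          simp [he_def, Pi.single_apply]
        have h2 : (e i' = e i) ↔ (i = i') := by
          constructor
          · intro h; exact (he h).symm
          · intro h; rw [h]
        simp only [id_eq, h1, h2, if_neg (show ¬ e i' = f from fun h => hfe i' h.symm), add_zero]
    rw [Finset.sum_congr rfl hpt, Finset.sum_add_distrib,
      Finset.sum_ite_eq' A (e i) (fun _ => (1:ZMod 2)),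
      Finset.sum_ite_eq' A f (fun _ => (1:ZMod 2))]
  refine ⟨S₀, ⟨?_, hsum0, ?_⟩, hcard⟩
  · intro h0
    rw [h0] at hcard
    simp at hcard
  · intro T hT hT0 hTS
    have hTnd : T.Nodup := Multiset.nodup_of_le hT hnd
    set A : Finset (Fin r → ZMod 2) := T.toFinset with hA_def
    have hAval : A.val = T := by
      rw [hA_def, Multiset.toFinset_val, Multiset.dedup_eq_self.2 hTnd]
    have hAF : A ⊆ F₀ := by
      intro x hx
      rw [hA_def, Multiset.mem_toFinset] at hx
      rw [hF₀, Multiset.mem_toFinset]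
      exact Multiset.mem_of_le hT hx
    have hsumTA : T.sum = A.sum id := by
      rw [← hAval]
      show A.val.sum = (Multiset.map id A.val).sum
      rw [Multiset.map_id]
    intro hzero
    have hAsum : A.sum id = 0 := by rw [← hsumTA]; exact hzero
    have hA0 : A ≠ ∅ := by
      intro h
      apply hT0
      rw [← hAval, h]
      rfl
    have hAF₀ : A ≠ F₀ := by
      intro h
      apply hTS
      rw [← hAval, h, hF₀val]
    by_cases hf : f ∈ A
    · have hex : ∃ g ∈ F₀, g ∉ A := by
        by_contra hc
        push_neg at hc
        exact hAF₀ (Finset.Subset.antisymm hAF hc)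
      obtain ⟨g, hgF, hgA⟩ := hex
      rcases hmemF₀ g hgF with rfl | ⟨i, rfl⟩
      · exact hgA hf
      · have hk := hkey A hAF i
        rw [if_neg hgA, if_pos hf, zero_add, hAsum] at hk
        exact hone hk.symm
    · obtain ⟨g, hgA⟩ := Finset.nonempty_iff_ne_empty.2 hA0
      rcases hmemF₀ g (hAF hgA) with rfl | ⟨i, rfl⟩
      · exact hf hgA
      · have hk := hkey A hAF i
        rw [if_pos hgA, if_neg hf, add_zero, hAsum] at hk
        exact hone hk.symm



lemma counting (r : ℕ) (hr : 2 ≤ r) {U : Multiset (Fin r → ZMod 2)}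
    (hU : IsMinZeroSum U) (hcardU : Multiset.card U = r + 1)
    (hndU : U.Nodup) {g₀ : Fin r → ZMod 2} (hg₀ : g₀ ∈ U)
    (n : ℕ) (Ws : Fin n → Multiset (Fin r → ZMod 2))
    (hWs : ∀ i, IsMinZeroSum (Ws i) ∧ ∀ x ∈ Ws i, x ∈ U) :
    (Multiset.card (∑ i, Ws i) : ℤ)
      = ((r:ℤ) - 1) * ((Finset.univ.filter (fun i => Ws i = U)).card : ℤ) + 2 * n ∧
    (Multiset.count g₀ (∑ i, Ws i) : ZMod 2)
      = (((Finset.univ.filter (fun i => Ws i = U)).card : ℕ) : ZMod 2) := by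
  classical
  have h3 : 3 ≤ Multiset.card U := by omega
  have hclass : ∀ i, (∃ g ∈ U, Ws i = Multiset.replicate 2 g) ∨ Ws i = U :=
    fun i => classify_s2 htwo_pi hU h3 hndU (hWs i).1 (hWs i).2
  constructor
  · have h1 : Multiset.card (∑ i, Ws i) = ∑ i, Multiset.card (Ws i) :=
      map_sum (⟨⟨Multiset.card, rfl⟩, Multiset.card_add⟩ :
        Multiset (Fin r → ZMod 2) →+ ℕ) Ws Finset.univ
    rw [h1, Nat.cast_sum]
    have h2 : ∀ i, (Multiset.card (Ws i) : ℤ)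
        = ((r:ℤ) - 1) * (if Ws i = U then 1 else 0) + 2 := by
      intro i
      by_cases hi : Ws i = U
      · rw [if_pos hi, hi, hcardU]
        push_cast
        ring
      · rcases hclass i with ⟨g, _, hg⟩ | h
        · rw [if_neg hi, hg]
          simp
        · exact absurd h hi
    rw [Finset.sum_congr rfl (fun i _ => h2 i), Finset.sum_add_distrib,
      ← Finset.mul_sum, Finset.sum_boole, Finset.sum_const]
    simp [mul_comm]
  · have h1 : Multiset.count g₀ (∑ i, Ws i) = ∑ i, Multiset.count g₀ (Ws i) :=
      Multiset.count_sum'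
    rw [h1, Nat.cast_sum]
    have h2 : ∀ i, ((Multiset.count g₀ (Ws i) : ℕ) : ZMod 2)
        = (if Ws i = U then 1 else 0) := by
      intro i
      by_cases hi : Ws i = U
      · rw [if_pos hi, hi, Multiset.count_eq_one_of_mem hndU hg₀]
        norm_num
      · rcases hclass i with ⟨g, _, hg⟩ | h
        · rw [if_neg hi, hg, Multiset.count_replicate]
          by_cases hgg : g = g₀ <;> simp [hgg]
          decide
        · exact absurd h hi
    rw [Finset.sum_congr rfl (fun i _ => h2 i), Finset.sum_boole]


theorem stmt_2 (r : ℕ) (hr : 2 ≤ r) :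
    Dav (Fin r → ZMod 2) = r + 1 ∧
    ∀ U : Multiset (Fin r → ZMod 2), IsMinZeroSum U → Multiset.card U = r + 1 →
    ∀ (k m : ℕ) (Us : Fin k → Multiset (Fin r → ZMod 2))
      (Vs : Fin m → Multiset (Fin r → ZMod 2)),
      (∀ i, IsMinZeroSum (Us i) ∧ ∀ x ∈ Us i, x ∈ U) →
      (∀ j, IsMinZeroSum (Vs j) ∧ ∀ x ∈ Vs j, x ∈ U) →
      (∑ i, Us i) = (∑ j, Vs j) →
      ((r : ℤ) - 1) ∣ ((m : ℤ) - (k : ℤ)) := by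
  classical
  constructor
  · -- Dav = r + 1
    unfold Dav
    apply le_antisymm
    · apply csSup_le
      · obtain ⟨S, hS, hc⟩ := exists_max r hr
        exact ⟨r + 1, S, hS, hc⟩
      · rintro n ⟨S, hS, rfl⟩
        exact card_le_aux r hr hS
    · apply le_csSup
      · exact ⟨r + 1, by rintro n ⟨S, hS, rfl⟩; exact card_le_aux r hr hS⟩
      · obtain ⟨S, hS, hc⟩ := exists_max r hr
        exact ⟨S, hS, hc⟩
  · intro U hU hcardU k m Us Vs hUs hVs hsum
    have h3 : 3 ≤ Multiset.card U := by omega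
    have hndU : U.Nodup := minZeroSum_nodup htwo_pi hU h3
    obtain ⟨g₀, hg₀⟩ := Multiset.exists_mem_of_ne_zero hU.1
    obtain ⟨hcU, hpU⟩ := counting r hr hU hcardU hndU hg₀ k Us hUs
    obtain ⟨hcV, hpV⟩ := counting r hr hU hcardU hndU hg₀ m Vs hVs
    set k₁ : ℕ := (Finset.univ.filter (fun i => Us i = U)).card with hk₁
    set m₁ : ℕ := (Finset.univ.filter (fun j => Vs j = U)).card with hm₁
    rw [hsum] at hcU hpU
    have hcards : ((r:ℤ) - 1) * (k₁:ℤ) + 2 * k = ((r:ℤ) - 1) * (m₁:ℤ) + 2 * m := by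
      rw [← hcU, ← hcV]
    have hpar : (k₁ : ZMod 2) = (m₁ : ZMod 2) := by rw [← hpU, ← hpV]
    have hmod : k₁ % 2 = m₁ % 2 := (ZMod.natCast_eq_natCast_iff k₁ m₁ 2).1 hpar
    have h2dvd : (2:ℤ) ∣ ((m₁:ℤ) - (k₁:ℤ)) := by omega
    obtain ⟨t, ht⟩ := h2dvd
    have h4 : (2:ℤ) * ((m:ℤ) - (k:ℤ)) = 2 * (((r:ℤ) - 1) * (-t)) := by
      linear_combination -hcards - ((r:ℤ) - 1) * ht
    have h5 : (m:ℤ) - (k:ℤ) = ((r:ℤ) - 1) * (-t) :=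
      mul_left_cancel₀ two_ne_zero h4
    exact ⟨-t, h5⟩
end

section
/- Let G ≅ C_{p^{s_1}}^{r_1} ⊕ C_{p^{s_2}}^{r_2} where p is a prime and r_1, r_2, s_1, s_2 ∈ ℕ with s_1 < s_2, and let G_0 ⊆ G be a subset generating G. Then there exists a subset G_0' ⊆ G_0 of cardinality r_2 that is an independent family of elements each of order p^{s_2}; in particular ⟨G_0'⟩ ≅ C_{p^{s_2}}^{r_2}. -/
def IndepSet {G : Type*} [AddCommGroup G] (s : Finset G) : Prop :=
  (∀ g ∈ s, g ≠ (0 : G)) ∧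
  ∀ f : G → ℤ, (∑ g ∈ s, f g • g) = 0 → ∀ g ∈ s, f g • g = 0

/-- The embedding `ZMod p →+ ZMod (p ^ s)` given by multiplication by `p ^ (s-1)`. -/
noncomputable def deltaHom (p s : ℕ) (hs : 0 < s) : ZMod p →+ ZMod (p ^ s) :=
  ZMod.lift p ⟨(AddMonoidHom.mulRight ((p : ZMod (p ^ s)) ^ (s - 1))).comp
      (Int.castAddHom (ZMod (p ^ s))), by
    simp only [AddMonoidHom.comp_apply, Int.coe_castAddHom, AddMonoidHom.mulRight_apply,
      Int.cast_natCast]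
    have : (p : ZMod (p ^ s)) * (p : ZMod (p ^ s)) ^ (s - 1) = ((p ^ s : ℕ) : ZMod (p ^ s)) := by
      push_cast
      rw [← pow_succ']
      congr 1
      omega
    rw [this, ZMod.natCast_self]⟩

lemma deltaHom_intCast (p s : ℕ) (hs : 0 < s) (y : ℤ) :
    deltaHom p s hs ((y : ℤ) : ZMod p) = (y : ZMod (p ^ s)) * (p : ZMod (p ^ s)) ^ (s - 1) := by
  simp [deltaHom, ZMod.lift_coe]

lemma deltaHom_cast (p s : ℕ) (hs : 0 < s) (hd : p ∣ p ^ s) (x : ZMod (p ^ s)) :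
    deltaHom p s hs (ZMod.castHom hd (ZMod p) x) = (p : ZMod (p ^ s)) ^ (s - 1) * x := by
  obtain ⟨y, rfl⟩ := ZMod.intCast_surjective (n := p ^ s) x
  rw [map_intCast, deltaHom_intCast, mul_comm]

lemma deltaHom_injective (p s : ℕ) (hp : p.Prime) (hs : 0 < s) :
    Function.Injective (deltaHom p s hs) := by
  haveI : NeZero p := ⟨hp.ne_zero⟩
  rw [injective_iff_map_eq_zero]
  intro a ha
  have hval : a = ((a.val : ℤ) : ZMod p) := by
    push_cast
    exact (ZMod.natCast_rightInverse a).symm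
  rw [hval, deltaHom_intCast] at ha
  have ha' : ((a.val * p ^ (s - 1) : ℕ) : ZMod (p ^ s)) = 0 := by push_cast; exact_mod_cast ha
  rw [ZMod.natCast_eq_zero_iff] at ha'
  have hps : p ^ s = p ^ (s - 1) * p := by rw [← pow_succ]; congr 1; omega
  rw [hps, mul_comm (a.val)] at ha'
  have hpd : p ∣ a.val := by
    rcases ha' with ⟨c, hc⟩
    have hne : p ^ (s - 1) ≠ 0 := pow_ne_zero _ hp.ne_zero
    have : a.val = p * c := by
      have := hc
      rw [mul_assoc] at this
      exact Nat.eq_of_mul_eq_mul_left (Nat.pos_of_ne_zero hne) this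
    exact ⟨c, this⟩
  have : a.val = 0 := Nat.eq_zero_of_dvd_of_lt hpd (ZMod.val_lt a)
  rw [hval]
  simp [this]

theorem stmt_4 (p : ℕ) (hp : p.Prime) (r₁ r₂ s₁ s₂ : ℕ)
    (hr₁ : 0 < r₁) (hr₂ : 0 < r₂) (hs₁ : 0 < s₁) (hs : s₁ < s₂)
    (G₀ : Set ((Fin r₁ → ZMod (p ^ s₁)) × (Fin r₂ → ZMod (p ^ s₂))))
    (hgen : AddSubgroup.closure G₀ = ⊤) :
    ∃ s : Finset ((Fin r₁ → ZMod (p ^ s₁)) × (Fin r₂ → ZMod (p ^ s₂))),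
      ↑s ⊆ G₀ ∧ s.card = r₂ ∧ IndepSet s ∧ ∀ g ∈ s, addOrderOf g = p ^ s₂ := by
  classical
  haveI : Fact p.Prime := ⟨hp⟩
  haveI : NeZero p := ⟨hp.ne_zero⟩
  haveI : NeZero (p ^ s₂) := ⟨pow_ne_zero _ hp.ne_zero⟩
  haveI : NeZero (p ^ s₁) := ⟨pow_ne_zero _ hp.ne_zero⟩
  have hs₂ : 0 < s₂ := lt_of_le_of_lt (Nat.zero_le _) hs
  have hd : p ∣ p ^ s₂ := dvd_pow_self p hs₂.ne'
  let π : ((Fin r₁ → ZMod (p ^ s₁)) × (Fin r₂ → ZMod (p ^ s₂))) →+ (Fin r₂ → (ZMod p)) := AddMonoidHom.mk' (fun g j => ZMod.castHom hd (ZMod p) (g.2 j))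
    (by intro a b; funext j; exact map_add (ZMod.castHom hd (ZMod p)) (a.2 j) (b.2 j))
  have hπsurj : Function.Surjective π := by
    intro v
    refine ⟨(0, fun j => (((v j).val : ℕ) : ZMod (p ^ s₂))), ?_⟩
    funext j
    show ZMod.castHom hd (ZMod p) (((v j).val : ℕ) : ZMod (p ^ s₂)) = v j
    rw [map_natCast]
    exact ZMod.natCast_rightInverse (v j)
  have hspan : Submodule.span (ZMod p) (π '' G₀) = ⊤ := by
    rw [eq_top_iff]
    intro x _
    have hx : x ∈ AddSubgroup.closure (π '' G₀) := by
      rw [← AddMonoidHom.map_closure, hgen]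
      obtain ⟨y, hy⟩ := hπsurj x
      exact AddSubgroup.mem_map.mpr ⟨y, AddSubgroup.mem_top y, hy⟩
    have hle : AddSubgroup.closure (π '' G₀) ≤ (Submodule.span (ZMod p) (π '' G₀)).toAddSubgroup :=
      (AddSubgroup.closure_le _).mpr Submodule.subset_span
    exact hle hx
  obtain ⟨b, hbsub, hbspan, hbli⟩ := exists_linearIndependent (ZMod p) (π '' G₀)
  rw [hspan] at hbspan
  have hbfin : b.Finite := hbli.setFinite
  haveI := hbfin.fintype
  have hbtop : ⊤ ≤ Submodule.span (ZMod p) (Set.range (Subtype.val : b → (Fin r₂ → (ZMod p)))) := by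
    rw [Subtype.range_coe, hbspan]
  have hbcard : Fintype.card b = r₂ := by
    have h1 := Module.finrank_eq_card_basis (Module.Basis.mk hbli hbtop)
    rw [Module.finrank_pi] at h1
    simpa using h1.symm
  let c : (Fin r₂ → (ZMod p)) → ((Fin r₁ → ZMod (p ^ s₁)) × (Fin r₂ → ZMod (p ^ s₂))) := fun v => if h : v ∈ π '' G₀ then h.choose else 0
  have hc : ∀ v ∈ b, c v ∈ G₀ ∧ π (c v) = v := by
    intro v hv
    have h : v ∈ π '' G₀ := hbsub hv
    simp only [c, dif_pos h]
    exact ⟨h.choose_spec.1, h.choose_spec.2⟩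
  let T : Finset ((Fin r₁ → ZMod (p ^ s₁)) × (Fin r₂ → ZMod (p ^ s₂))) := hbfin.toFinset.image c
  have hinjc : Set.InjOn c ↑hbfin.toFinset := by
    intro v hv w hw hvw
    rw [Finset.mem_coe, Set.Finite.mem_toFinset] at hv hw
    rw [← (hc v hv).2, ← (hc w hw).2, hvw]
  have hTcard : T.card = r₂ := by
    rw [Finset.card_image_of_injOn hinjc, Set.Finite.card_toFinset, hbcard]
  have hTmem : ∀ g ∈ T, g ∈ G₀ ∧ π g ∈ b := by
    intro g hg
    obtain ⟨v, hv, rfl⟩ := Finset.mem_image.mp hg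
    rw [Set.Finite.mem_toFinset] at hv
    exact ⟨(hc v hv).1, by rw [(hc v hv).2]; exact hv⟩
  have hπinjT : ∀ g ∈ T, ∀ h ∈ T, π g = π h → g = h := by
    intro g hg h hh he
    obtain ⟨v, hv, rfl⟩ := Finset.mem_image.mp hg
    obtain ⟨w, hw, rfl⟩ := Finset.mem_image.mp hh
    rw [Set.Finite.mem_toFinset] at hv hw
    rw [(hc v hv).2, (hc w hw).2] at he
    rw [he]
  have hπne : ∀ g ∈ T, π g ≠ 0 := fun g hg => hbli.ne_zero ⟨π g, (hTmem g hg).2⟩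
  have hliT : ∀ a : ((Fin r₁ → ZMod (p ^ s₁)) × (Fin r₂ → ZMod (p ^ s₂))) → (ZMod p), (∑ g ∈ T, a g • π g) = 0 → ∀ g ∈ T, a g = 0 := by
    intro a ha
    let e : {x // x ∈ T} → b := fun x => ⟨π x.1, (hTmem x.1 x.2).2⟩
    have he : Function.Injective e := by
      intro x y hxy
      exact Subtype.ext (hπinjT _ x.2 _ y.2 (congrArg Subtype.val hxy))
    have hli2 : LinearIndependent (ZMod p) (fun x : {x // x ∈ T} => π x.1) := hbli.comp e he
    intro g hg
    have h5 := Fintype.linearIndependent_iff.mp hli2 (fun x => a x.1) (by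
      rw [Finset.univ_eq_attach]
      rw [Finset.sum_attach T (fun g => a g • π g)]
      exact ha)
    exact h5 ⟨g, hg⟩
  have hkill : ∀ x : ((Fin r₁ → ZMod (p ^ s₁)) × (Fin r₂ → ZMod (p ^ s₂))), (p ^ s₂ : ℕ) • x = 0 := by
    intro x
    have h1 : (p ^ s₂ : ℕ) • x.1 = 0 := by
      funext i
      show (p ^ s₂ : ℕ) • x.1 i = 0
      rw [nsmul_eq_mul]
      have hz : ((p ^ s₂ : ℕ) : ZMod (p ^ s₁)) = 0 := by
        rw [ZMod.natCast_eq_zero_iff]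
        exact pow_dvd_pow p hs.le
      rw [hz, zero_mul]
    have h2 : (p ^ s₂ : ℕ) • x.2 = 0 := by
      funext j
      show (p ^ s₂ : ℕ) • x.2 j = 0
      rw [nsmul_eq_mul, ZMod.natCast_self, zero_mul]
    have : (p ^ s₂ : ℕ) • x = ((p ^ s₂ : ℕ) • x.1, (p ^ s₂ : ℕ) • x.2) := rfl
    rw [this, h1, h2]
    rfl
  have horder : ∀ g ∈ T, addOrderOf g = p ^ s₂ := by
    intro g hg
    obtain ⟨k, hk, hke⟩ := (Nat.dvd_prime_pow hp).mp (addOrderOf_dvd_of_nsmul_eq_zero (hkill g))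
    rcases Nat.lt_or_ge k s₂ with hlt | hge
    · exfalso
      have hdvd3 : addOrderOf g ∣ p ^ (s₂ - 1) := by
        rw [hke]; exact pow_dvd_pow p (by omega)
      have hz : (p ^ (s₂ - 1) : ℕ) • g = 0 := addOrderOf_dvd_iff_nsmul_eq_zero.mp hdvd3
      apply hπne g hg
      funext j
      have hcj : (p ^ (s₂ - 1) : ℕ) • g.2 j = 0 := by
        have := congrArg (fun x => x.2 j) hz
        simpa only [Prod.smul_snd, Pi.smul_apply, Prod.snd_zero, Pi.zero_apply] using this
      have hmul : (p : ZMod (p ^ s₂)) ^ (s₂ - 1) * g.2 j = 0 := by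
        rw [← hcj, nsmul_eq_mul]
        push_cast
        ring
      have hδ0 : deltaHom p s₂ hs₂ (ZMod.castHom hd (ZMod p) (g.2 j)) = 0 := by
        rw [deltaHom_cast p s₂ hs₂ hd, hmul]
      have := deltaHom_injective p s₂ hp hs₂ (by rw [hδ0, map_zero] : deltaHom p s₂ hs₂ (ZMod.castHom hd (ZMod p) (g.2 j)) = deltaHom p s₂ hs₂ 0)
      exact this
    · rw [hke, le_antisymm hk hge]
  have hkz : ∀ x : ((Fin r₁ → ZMod (p ^ s₁)) × (Fin r₂ → ZMod (p ^ s₂))), ((p : ℤ) ^ s₂) • x = 0 := by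
    intro x
    have h := hkill x
    have h2 : ((p ^ s₂ : ℕ) : ℤ) • x = 0 := by rwa [natCast_zsmul]
    rw [← h2]
    congr 1
  have hindep : IndepSet T := by
    constructor
    · intro g hg h0
      exact hπne g hg (by rw [h0, map_zero])
    · intro f hrel g hg
      have claim : ∀ k, k ≤ s₂ → ∀ g ∈ T, (p : ℤ) ^ k ∣ f g := by
        intro k
        induction k with
        | zero => intro _ g hg; simp
        | succ k ih =>
          intro hk1 g hg
          have ihk := ih (by omega)
          have hfq : ∀ x ∈ T, f x = (p : ℤ) ^ k * (f x / (p : ℤ) ^ k) :=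
            fun x hx => (Int.mul_ediv_cancel' (ihk x hx)).symm
          set q : ((Fin r₁ → ZMod (p ^ s₁)) × (Fin r₂ → ZMod (p ^ s₂))) → ℤ := fun x => f x / (p : ℤ) ^ k with hqdef
          have h2 : ∀ j, ∑ x ∈ T, ((f x : ℤ) : ZMod (p ^ s₂)) * x.2 j = 0 := by
            intro j
            have h := congrArg (fun y : ((Fin r₁ → ZMod (p ^ s₁)) × (Fin r₂ → ZMod (p ^ s₂))) => y.2 j) hrel
            simp only [Prod.snd_sum, Finset.sum_apply, Prod.smul_snd, Pi.smul_apply,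
              zsmul_eq_mul] at h
            exact h
          have h3 : ∀ j, ∑ x ∈ T, ((q x : ℤ) : (ZMod p)) * (π x j) = 0 := by
            intro j
            apply deltaHom_injective p s₂ hp hs₂
            rw [map_zero, map_sum]
            have hterm : ∀ x ∈ T, deltaHom p s₂ hs₂ (((q x : ℤ) : (ZMod p)) * π x j)
                = (p : ZMod (p ^ s₂)) ^ (s₂ - 1 - k) * (((f x : ℤ) : ZMod (p ^ s₂)) * x.2 j) := by
              intro x hx
              have e1 : ((q x : ℤ) : (ZMod p)) * π x j = (q x) • (π x j) := (zsmul_eq_mul _ _).symm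
              rw [e1, map_zsmul]
              show (q x) • deltaHom p s₂ hs₂ (ZMod.castHom hd (ZMod p) (x.2 j)) = _
              rw [deltaHom_cast p s₂ hs₂ hd, zsmul_eq_mul, hfq x hx]
              push_cast
              rw [show (p : ZMod (p ^ s₂)) ^ (s₂ - 1)
                  = (p : ZMod (p ^ s₂)) ^ (s₂ - 1 - k) * (p : ZMod (p ^ s₂)) ^ k from by
                rw [← pow_add]; congr 1; omega]
              ring
            rw [Finset.sum_congr rfl hterm, ← Finset.mul_sum, h2 j, mul_zero]
          have h4 : (∑ x ∈ T, ((q x : ℤ) : (ZMod p)) • π x) = 0 := by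
            funext j
            have := h3 j
            simpa [Finset.sum_apply] using this
          have h5 := hliT _ h4 g hg
          have h6 : (p : ℤ) ∣ q g := by
            rwa [ZMod.intCast_zmod_eq_zero_iff_dvd] at h5
          rw [hfq g hg, pow_succ]
          exact mul_dvd_mul_left _ h6
      obtain ⟨m, hm⟩ := claim s₂ le_rfl g hg
      rw [hm, mul_smul, hkz]
  exact ⟨T, fun g hg => (hTmem g hg).1, hTcard, hindep, horder⟩
end

section
/- Let G be a finite abelian group and let U be a minimal zero-sum sequence over G of length |U| = D(G). Then the support of U generates G. -/
lemma minZeroSum_card_le {G : Type*} [AddCommGroup G] [Fintype G] (S : Multiset G)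
    (h : IsMinZeroSum S) : Multiset.card S ≤ Fintype.card G := by
  obtain ⟨l, rfl⟩ : ∃ l : List G, (l : Multiset G) = S := ⟨S.toList, S.coe_toList⟩
  have key : ∀ i j : Fin l.length, i < j → (l.take (i+1)).sum ≠ (l.take (j+1)).sum := by
    intro i j hij heq
    set seg := (l.drop (i+1)).take (j - i) with hseg
    have htake : l.take (j+1) = l.take (i+1) ++ seg := by
      rw [hseg, ← List.take_add]
      congr 1
      omega
    have hsum : seg.sum = 0 := by
      have h2 := congrArg List.sum htake
      rw [List.sum_append, ← heq] at h2
      exact (left_eq_add.mp h2)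
    have hsl : List.Sublist seg l := (List.take_sublist _ _).trans (List.drop_sublist _ _)
    have hlen : seg.length = (j : ℕ) - i := by
      rw [hseg, List.length_take, List.length_drop]
      have := j.isLt
      omega
    refine h.2.2 (↑seg) ?_ ?_ ?_ ?_
    · exact (Multiset.coe_le).mpr hsl.subperm
    · intro h0
      rw [Multiset.coe_eq_zero] at h0
      have := hlen
      rw [h0] at this
      simp at this
      omega
    · intro hes
      have hc := congrArg Multiset.card hes
      simp only [Multiset.coe_card] at hc
      have := j.isLt
      omega
    · simpa using hsum
  have hinj : Function.Injective (fun i : Fin l.length => (l.take (i+1)).sum) := by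
    intro i j hij
    rcases lt_trichotomy i j with h' | h' | h'
    · exact absurd hij (key i j h')
    · exact h'
    · exact absurd hij.symm (key j i h')
  have h2 := Fintype.card_le_of_injective _ hinj
  simpa using h2

lemma le_pair {α : Type*} {a b : α} {T : Multiset α} (h : T ≤ {a, b}) :
    T = 0 ∨ T = {a} ∨ T = {b} ∨ T = {a, b} := by
  have hc : Multiset.card T ≤ 2 := by simpa using Multiset.card_le_card h
  rcases (show Multiset.card T = 0 ∨ Multiset.card T = 1 ∨ Multiset.card T = 2 by omega)
    with h0 | h1 | h2
  · exact Or.inl (Multiset.card_eq_zero.mp h0)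
  · obtain ⟨x, rfl⟩ := Multiset.card_eq_one.mp h1
    have hx : x ∈ ({a, b} : Multiset α) :=
      Multiset.mem_of_le h (Multiset.mem_singleton_self x)
    rcases Multiset.mem_cons.mp hx with rfl | hx'
    · exact Or.inr (Or.inl rfl)
    · rw [Multiset.mem_singleton] at hx'
      subst hx'
      exact Or.inr (Or.inr (Or.inl rfl))
  · refine Or.inr (Or.inr (Or.inr ?_))
    exact Multiset.eq_of_le_of_card_le h (by simp [h2])

theorem stmt_5 {G : Type*} [AddCommGroup G] [Fintype G] (U : Multiset G)
    (hU : IsMinZeroSum U) (hlen : Multiset.card U = Dav G) :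
    AddSubgroup.closure {g : G | g ∈ U} = ⊤ := by
  classical
  by_contra hne
  set H := AddSubgroup.closure {g : G | g ∈ U} with hH
  obtain ⟨g, hg⟩ : ∃ g : G, g ∉ H := by
    by_contra hall
    push_neg at hall
    exact hne ((AddSubgroup.eq_top_iff' H).mpr hall)
  have hsub : ∀ x ∈ U, x ∈ H := fun x hx => AddSubgroup.subset_closure hx
  obtain ⟨u, hu⟩ := Multiset.exists_mem_of_ne_zero hU.1
  set E := U.erase u with hE
  have hEU : u ::ₘ E = U := Multiset.cons_erase hu
  have hEsub : ∀ x ∈ E, x ∈ H := fun x hx => hsub x (Multiset.mem_of_le (Multiset.erase_le u U) hx)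
  set W : Multiset G := ({g, u - g} : Multiset G) + E with hW
  have hWsum : W.sum = 0 := by
    rw [hW, Multiset.sum_add]
    have : ({g, u - g} : Multiset G).sum = u := by simp
    rw [this]
    have : (u ::ₘ E).sum = 0 := by rw [hEU]; exact hU.2.1
    rw [Multiset.sum_cons] at this
    exact this
  have hcardU : 0 < Multiset.card U := Multiset.card_pos.mpr hU.1
  have hcardE : Multiset.card E = Multiset.card U - 1 := by
    rw [hE, Multiset.card_erase_of_mem hu]
    rfl
  have hcardW : Multiset.card W = Multiset.card U + 1 := by
    rw [hW, Multiset.card_add]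
    simp
    omega
  have hWmin : IsMinZeroSum W := by
    refine ⟨?_, hWsum, ?_⟩
    · intro h0
      have := congrArg Multiset.card h0
      rw [hcardW] at this
      simp at this
    · intro T hTle hT0 hTW hTsum
      set T₁ : Multiset G := T ∩ E with hT1
      set T₂ : Multiset G := T - E with hT2
      have hT12 : T = T₁ + T₂ := by
        ext x
        rw [Multiset.count_add, hT1, hT2, Multiset.count_inter, Multiset.count_sub]
        omega
      have hT1E : T₁ ≤ E := Multiset.inter_le_right
      have hT2P : T₂ ≤ ({g, u - g} : Multiset G) := by
        rw [hT2, Multiset.sub_le_iff_le_add]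
        exact hTle
      have hsum1 : T₁.sum ∈ H :=
        multiset_sum_mem _ (fun x hx => hEsub x (Multiset.mem_of_le hT1E hx))
      rcases le_pair hT2P with h2 | h2 | h2 | h2
      · -- T₂ = 0 : T ≤ E ≤ U, proper, zero-sum : contradicts minimality of U
        rw [h2, add_zero] at hT12
        have hle : T ≤ U := by
          rw [hT12]
          exact le_trans hT1E (Multiset.erase_le u U)
        have hneU : T ≠ U := by
          intro hq
          have hc1 := Multiset.card_le_card hT1E
          have hc2 : Multiset.card T = Multiset.card T₁ := by rw [hT12]
          have hc3 : Multiset.card T = Multiset.card U := by rw [hq]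
          omega
        exact hU.2.2 T hle hT0 hneU hTsum
      · -- T₂ = {g} : g ∈ H, contradiction
        rw [hT12, h2, Multiset.sum_add, Multiset.sum_singleton] at hTsum
        have : g = -T₁.sum := eq_neg_of_add_eq_zero_right hTsum
        exact hg (this ▸ neg_mem hsum1)
      · -- T₂ = {u - g} : g = T₁.sum + u ∈ H
        rw [hT12, h2, Multiset.sum_add, Multiset.sum_singleton] at hTsum
        have hg' : g = T₁.sum + u := by
          have e2 : T₁.sum + u - g = 0 := by rw [← hTsum]; abel
          have := sub_eq_zero.mp e2
          exact this.symm
        exact hg (hg' ▸ add_mem hsum1 (hsub u hu))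
      · -- T₂ = {g, u-g} : then u ::ₘ T₁ is a zero-sum subsequence of U
        have hpsum : ({g, u - g} : Multiset G).sum = u := by simp
        rw [hT12, h2, Multiset.sum_add, hpsum] at hTsum
        set T' : Multiset G := u ::ₘ T₁ with hT'
        have hT'le : T' ≤ U := by
          rw [← hEU]
          exact Multiset.cons_le_cons u hT1E
        have hT'sum : T'.sum = 0 := by
          rw [hT', Multiset.sum_cons]
          rw [add_comm]
          exact hTsum
        have hT'ne : T' ≠ U := by
          intro hq
          have hcT : Multiset.card T' = Multiset.card U := by rw [hq]
          rw [hT', Multiset.card_cons] at hcT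
          have hT1card : Multiset.card E ≤ Multiset.card T₁ := by omega
          have hT1eq : T₁ = E := Multiset.eq_of_le_of_card_le hT1E hT1card
          apply hTW
          rw [hT12, h2, hT1eq, hW, add_comm]
        exact hU.2.2 T' hT'le (Multiset.cons_ne_zero) hT'ne hT'sum
  -- contradiction with maximality
  have hBdd : BddAbove {n : ℕ | ∃ S : Multiset G, IsMinZeroSum S ∧ Multiset.card S = n} := by
    refine ⟨Fintype.card G, ?_⟩
    rintro n ⟨S, hS, rfl⟩
    exact minZeroSum_card_le S hS
  have hmem : Multiset.card U + 1 ∈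
      {n : ℕ | ∃ S : Multiset G, IsMinZeroSum S ∧ Multiset.card S = n} :=
    ⟨W, hWmin, hcardW⟩
  have := le_csSup hBdd hmem
  rw [← Dav] at this
  omega
end

section
/- Let G be a finite abelian group and U a minimal zero-sum sequence over G. Let A ⊆ supp(U) be a subset such that (1) for every g ∈ supp(U) \ A there exists h ∈ A with g ∈ ⟨h⟩, and (2) for any two distinct g_1, g_2 ∈ A one has g_1 ∉ ⟨g_2⟩. If supp(U) generates a non-cyclic group, then A is not an independent set. -/
theorem stmt_6 {G : Type*} [AddCommGroup G] [Fintype G] (U : Multiset G)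
    (hU : IsMinZeroSum U) (A : Finset G)
    (hsub : ∀ g ∈ A, g ∈ U)
    (h1 : ∀ g ∈ U, g ∉ A → ∃ h ∈ A, g ∈ AddSubgroup.zmultiples h)
    (h2 : ∀ g₁ ∈ A, ∀ g₂ ∈ A, g₁ ≠ g₂ → g₁ ∉ AddSubgroup.zmultiples g₂)
    (hnoncyc : ¬ ∃ h : G, AddSubgroup.closure {g : G | g ∈ U} = AddSubgroup.zmultiples h) :
    ¬ IndepSet A := by
  classical
  intro hind
  set φ : G → G := fun g =>
    if hg : g ∈ A then g else if hU' : g ∈ U then (h1 g hU' hg).choose else 0 with hφdef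
  have hφA : ∀ g ∈ A, φ g = g := by
    intro g hg; simp only [hφdef, dif_pos hg]
  have hφ : ∀ g ∈ U, φ g ∈ A ∧ g ∈ AddSubgroup.zmultiples (φ g) := by
    intro g hg
    by_cases hA : g ∈ A
    · simp only [hφdef, dif_pos hA]
      exact ⟨hA, AddSubgroup.mem_zmultiples g⟩
    · simp only [hφdef, dif_neg hA, dif_pos hg]
      exact ⟨(h1 g hg hA).choose_spec.1, (h1 g hg hA).choose_spec.2⟩
  by_cases hA2 : ∃ h₀ ∈ A, ∃ h₁ ∈ A, h₀ ≠ h₁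
  · obtain ⟨h₀, hh₀, h₁, hh₁, hne⟩ := hA2
    set Uh : G → Multiset G := fun h => U.filter (fun g => φ g = h) with hUhdef
    have hpart : ∑ h ∈ A, Uh h = U := by
      ext a
      rw [Multiset.count_sum']
      simp only [hUhdef, Multiset.count_filter]
      rw [Finset.sum_ite_eq A (φ a) (fun _ => Multiset.count a U)]
      by_cases ha : a ∈ U
      · rw [if_pos (hφ a ha).1]
      · simp [Multiset.count_eq_zero_of_notMem ha]
    have hsum : ∑ h ∈ A, (Uh h).sum = 0 := by
      rw [← Multiset.sum_sum, hpart, hU.2.1]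
    have hmem : ∀ h ∈ A, (Uh h).sum ∈ AddSubgroup.zmultiples h := by
      intro h hh
      refine AddSubgroup.multiset_sum_mem _ _ ?_
      intro g hg
      rw [hUhdef] at hg
      simp only [Multiset.mem_filter] at hg
      exact hg.2 ▸ (hφ g hg.1).2
    set f : G → ℤ := fun h =>
      if hh : h ∈ A then (AddSubgroup.mem_zmultiples_iff.mp (hmem h hh)).choose else 0 with hfdef
    have hf : ∀ h ∈ A, f h • h = (Uh h).sum := by
      intro h hh
      simp only [hfdef, dif_pos hh]
      exact (AddSubgroup.mem_zmultiples_iff.mp (hmem h hh)).choose_spec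
    have hzero : ∀ h ∈ A, (Uh h).sum = 0 := by
      intro h hh
      rw [← hf h hh]
      refine hind.2 f ?_ h hh
      rw [Finset.sum_congr rfl hf, hsum]
    refine hU.2.2 (Uh h₀) (Multiset.filter_le _ U) ?_ ?_ (hzero h₀ hh₀)
    · intro h0
      have : h₀ ∈ Uh h₀ := by
        simp only [hUhdef, Multiset.mem_filter]
        exact ⟨hsub h₀ hh₀, hφA h₀ hh₀⟩
      rw [h0] at this; exact absurd this (Multiset.notMem_zero _)
    · intro hEq
      have : h₁ ∈ Uh h₀ := hEq ▸ hsub h₁ hh₁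
      simp only [hUhdef, Multiset.mem_filter] at this
      exact hne.symm (hφA h₁ hh₁ ▸ this.2)
  · push_neg at hA2
    obtain ⟨g, hg⟩ := Multiset.exists_mem_of_ne_zero hU.1
    have hφg := hφ g hg
    refine hnoncyc ⟨φ g, le_antisymm ?_ ?_⟩
    · rw [AddSubgroup.closure_le]
      intro x hx
      have hφx := hφ x hx
      have h3 : φ x = φ g := hA2 _ hφx.1 _ hφg.1
      exact h3 ▸ hφx.2
    · exact AddSubgroup.zmultiples_le_of_mem
        (AddSubgroup.subset_closure (hsub _ hφg.1))
end

section
/- Let G be a finite abelian group, G_0 ⊆ G, and let d = min Δ(G_0) be the minimal distance of the monoid B(G_0) of zero-sum sequences over G_0 (assuming Δ(G_0) ≠ ∅). If V is a minimal zero-sum sequence over G_0 such that −g ∈ G_0 for every g ∈ supp(V), then d divides |V| − 2. -/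
/-- The set of factorization lengths of a zero-sum sequence `A` into minimal
zero-sum sequences with all terms in `G₀`. -/
def LengthsOf {G : Type*} [AddCommGroup G] (G₀ : Set G) (A : Multiset G) : Set ℕ :=
  {k | ∃ fac : Multiset (Multiset G), Multiset.card fac = k ∧
        (∀ V ∈ fac, IsMinZeroSum V ∧ ∀ x ∈ V, x ∈ G₀) ∧ fac.sum = A}

/-- The set of (successive) distances of the monoid of zero-sum sequences over `G₀`. -/
def DeltaSet {G : Type*} [AddCommGroup G] (G₀ : Set G) : Set ℕ :=
  {d | 0 < d ∧ ∃ (A : Multiset G) (k : ℕ), k ∈ LengthsOf G₀ A ∧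
        k + d ∈ LengthsOf G₀ A ∧ ∀ j, k < j → j < k + d → j ∉ LengthsOf G₀ A}

lemma msum_map_neg {G : Type*} [AddCommGroup G] (V : Multiset G) :
    (V.map (fun x => -x)).sum = -V.sum := by
  induction V using Multiset.induction with
  | empty => simp
  | cons a s ih => simp [ih, neg_add, add_comm]

lemma lengths_add {G : Type*} [AddCommGroup G] (G₀ : Set G) {A B : Multiset G} {k l : ℕ}
    (hk : k ∈ LengthsOf G₀ A) (hl : l ∈ LengthsOf G₀ B) :
    k + l ∈ LengthsOf G₀ (A + B) := by
  obtain ⟨f1, hc1, h1, hs1⟩ := hk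
  obtain ⟨f2, hc2, h2, hs2⟩ := hl
  refine ⟨f1 + f2, by simp [hc1, hc2], fun W hW => ?_, by simp [hs1, hs2]⟩
  rcases Multiset.mem_add.1 hW with h | h
  exacts [h1 W h, h2 W h]

lemma lengths_nsmul {G : Type*} [AddCommGroup G] (G₀ : Set G) {B : Multiset G} {l : ℕ}
    (hl : l ∈ LengthsOf G₀ B) (q : ℕ) : q * l ∈ LengthsOf G₀ (q • B) := by
  induction q with
  | zero => exact ⟨0, by simp, by simp, rfl⟩
  | succ n ih =>
      have := lengths_add G₀ ih hl
      simpa [succ_nsmul, Nat.succ_mul] using this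

lemma gap_lemma {G : Type*} [AddCommGroup G] (G₀ : Set G) {A : Multiset G} {k1 k2 : ℕ}
    (h1 : k1 ∈ LengthsOf G₀ A) (h2 : k2 ∈ LengthsOf G₀ A) (hlt : k1 < k2) :
    ∃ d ∈ DeltaSet G₀, d ≤ k2 - k1 := by
  classical
  set P : ℕ → Prop := fun j => j ∈ LengthsOf G₀ A ∧ k1 ≤ j with hP
  have hk1le : k1 ≤ k2 - 1 := Nat.le_sub_one_of_lt hlt
  have hPk' : P (Nat.findGreatest P (k2 - 1)) :=
    Nat.findGreatest_spec hk1le ⟨h1, le_refl _⟩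
  set k' := Nat.findGreatest P (k2 - 1) with hk'
  have hk'lt : k' < k2 := lt_of_le_of_lt (Nat.findGreatest_le _) (Nat.sub_lt (by omega) one_pos)
  refine ⟨k2 - k', ⟨by omega, A, k', hPk'.1, ?_, ?_⟩, by omega⟩
  · have : k' + (k2 - k') = k2 := by omega
    rw [this]; exact h2
  · intro j hj1 hj2 hjmem
    have hj2' : j < k2 := by omega
    exact Nat.findGreatest_is_greatest hj1 (by omega) ⟨hjmem, le_trans hPk'.2 (le_of_lt hj1)⟩

theorem stmt_7 {G : Type*} [AddCommGroup G] [Fintype G] (G₀ : Set G)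
    (hne : (DeltaSet G₀).Nonempty) (V : Multiset G)
    (hV : IsMinZeroSum V) (hVG₀ : ∀ x ∈ V, x ∈ G₀)
    (hneg : ∀ x ∈ V, -x ∈ G₀) :
    sInf (DeltaSet G₀) ∣ Multiset.card V - 2 := by
  classical
  set d := sInf (DeltaSet G₀) with hd
  have hdmem : d ∈ DeltaSet G₀ := Nat.sInf_mem hne
  obtain ⟨hdpos, B, m, hm, hmd, -⟩ := hdmem
  rcases le_or_gt (Multiset.card V) 2 with hcard | hcard
  · have : Multiset.card V - 2 = 0 := by omega
    rw [this]; exact dvd_zero d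
  -- card V ≥ 3, so 0 ∉ V
  have h0V : (0 : G) ∉ V := by
    intro h0
    have hle : ({0} : Multiset G) ≤ V := Multiset.singleton_le.2 h0
    have hne0 : ({0} : Multiset G) ≠ 0 := by simp
    have hneV : ({0} : Multiset G) ≠ V := by
      intro h; rw [← h] at hcard; simp at hcard
    exact hV.2.2 {0} hle hne0 hneV (by simp)
  set nV : Multiset G := V.map (fun x => -x) with hnV
  have hnVmin : IsMinZeroSum nV := by
    refine ⟨by simpa [hnV] using hV.1, by simp [hnV, msum_map_neg, hV.2.1], ?_⟩
    intro T hT hT0 hTne hTsum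
    have hmap : T.map (fun x => -x) ≤ nV.map (fun x => -x) := Multiset.map_le_map hT
    have hid : nV.map (fun x => -x) = V := by
      simp [hnV, Multiset.map_map, Function.comp]
    rw [hid] at hmap
    refine hV.2.2 (T.map (fun x => -x)) hmap (by simpa using hT0) ?_
      (by simp [msum_map_neg, hTsum])
    intro heq
    apply hTne
    have : (T.map (fun x => -x)).map (fun x => -x) = V.map (fun x => -x) := by rw [heq]
    simpa [Multiset.map_map, Function.comp, hnV] using this
  set A : Multiset G := V + nV with hA
  have h2 : 2 ∈ LengthsOf G₀ A := by
    refine ⟨{V, nV}, rfl, ?_, by simp [hA]⟩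
    intro W hW
    rcases Multiset.mem_cons.1 hW with h | h
    · subst h; exact ⟨hV, hVG₀⟩
    · have : W = nV := by simpa using h
      subst this
      refine ⟨hnVmin, ?_⟩
      intro x hx
      obtain ⟨y, hy, rfl⟩ := Multiset.mem_map.1 hx
      exact hneg y hy
  have hcardA : Multiset.card V ∈ LengthsOf G₀ A := by
    refine ⟨V.map (fun g => {g, -g}), by simp, ?_, ?_⟩
    · intro W hW
      obtain ⟨g, hg, rfl⟩ := Multiset.mem_map.1 hW
      have hg0 : g ≠ 0 := fun h => h0V (h ▸ hg)
      refine ⟨⟨by simp, by simp, ?_⟩, ?_⟩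
      · intro T hT hT0 hTne hTsum
        have hcT : Multiset.card T ≤ 2 := by
          have := Multiset.card_le_card hT
          simpa using this
        interval_cases h : Multiset.card T
        · exact hT0 (Multiset.card_eq_zero.1 h)
        · obtain ⟨x, hx⟩ := Multiset.card_eq_one.1 h
          subst hx
          have hxmem : x ∈ ({g, -g} : Multiset G) :=
            Multiset.mem_of_le hT (by simp)
          simp only [Multiset.sum_singleton] at hTsum
          rcases Multiset.mem_cons.1 hxmem with h | h
          · exact hg0 (h ▸ hTsum)
          · have : x = -g := by simpa using h
            rw [this] at hTsum
            exact hg0 (by simpa using (neg_eq_zero.1 hTsum))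
        · exact hTne (Multiset.eq_of_le_of_card_le hT (by simp [h]))
      · intro x hx
        rcases Multiset.mem_cons.1 hx with h | h
        · exact h ▸ hVG₀ g hg
        · have : x = -g := by simpa using h
          exact this ▸ hneg g hg
    · have : (V.map (fun g => ({g, -g} : Multiset G))).sum
          = (V.map (fun g => ({g} : Multiset G))).sum + (V.map (fun g => ({-g} : Multiset G))).sum := by
        rw [← Multiset.sum_map_add]
        rfl
      rw [hA, this, Multiset.sum_map_singleton]
      congr 1
      have : V.map (fun g => ({-g} : Multiset G)) = (V.map (fun x => -x)).map (fun a => ({a} : Multiset G)) := by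
        simp [Multiset.map_map, Function.comp]
      rw [this, Multiset.sum_map_singleton, hnV]
  -- main argument
  set n := Multiset.card V - 2 with hn
  rw [Nat.dvd_iff_mod_eq_zero]
  by_contra hr
  set r := n % d with hrdef
  have hrpos : 0 < r := Nat.pos_of_ne_zero hr
  have hrlt : r < d := Nat.mod_lt _ hdpos
  set q := n / d with hq
  have hnqd : n = q * d + r := by
    rw [hq, hrdef, mul_comm]; exact (Nat.div_add_mod n d).symm
  set C := A + q • B with hC
  have hl1 : 2 + q * (m + d) ∈ LengthsOf G₀ C :=
    lengths_add G₀ h2 (lengths_nsmul G₀ hmd q)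
  have hl2 : Multiset.card V + q * m ∈ LengthsOf G₀ C :=
    lengths_add G₀ hcardA (lengths_nsmul G₀ hm q)
  have hl2eq : Multiset.card V + q * m = (2 + q * (m + d)) + r := by
    have : Multiset.card V = 2 + n := by omega
    rw [this, hnqd]; ring
  rw [hl2eq] at hl2
  have hlt : 2 + q * (m + d) < (2 + q * (m + d)) + r := by omega
  obtain ⟨d', hd'mem, hd'le⟩ := gap_lemma G₀ hl1 hl2 hlt
  have : d ≤ d' := Nat.sInf_le hd'mem
  omega
end

section
/- Let p be a prime, G a finite abelian p-group that is not cyclic, with gcd(exp(G) − 2, D(G) − 2) = 1. Then for every minimal zero-sum sequence U over G of length D(G), there exist k ∈ ℕ and minimal zero-sum sequences U_1, …, U_k, V_1, …, V_{k+1} with all terms in supp(U) ∪ (−supp(U)) such that U_1 ⋯ U_k = V_1 ⋯ V_{k+1}. -/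
section Aux

variable {G : Type*} [AddCommGroup G]

/-- Minimal zero-sum sequences have length at most |G|. -/
lemma minzero_card_le [Fintype G] {S : Multiset G} (hS : IsMinZeroSum S) :
    Multiset.card S ≤ Fintype.card G := by
  by_contra h
  push_neg at h
  set l := S.toList with hldef
  have hlS : (l : Multiset G) = S := Multiset.coe_toList S
  have hlen : l.length = Multiset.card S := by rw [← hlS]; simp
  have hcard : Fintype.card G < Fintype.card (Fin (Multiset.card S)) := by simpa using h
  obtain ⟨i, j, hij, hfij⟩ :=
    Fintype.exists_ne_map_eq_of_card_lt (fun i : Fin (Multiset.card S) => (l.take i).sum) hcard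
  wlog hlt : (i : ℕ) < (j : ℕ) generalizing i j
  · exact this j i hij.symm hfij.symm (by have := i.2; have := j.2; omega)
  set s : List G := (l.drop i).take (j - i) with hsdef
  have htake : l.take (j : ℕ) = l.take (i : ℕ) ++ s := by
    rw [hsdef, ← List.take_add]
    congr 1
    omega
  have hsum : s.sum = 0 := by
    have h1 : (l.take (j : ℕ)).sum = (l.take (i : ℕ)).sum + s.sum := by
      rw [htake, List.sum_append]
    rw [← hfij] at h1
    have := h1.symm
    rwa [add_eq_left] at this
  have hslen : s.length = (j : ℕ) - (i : ℕ) := by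
    rw [hsdef, List.length_take, List.length_drop]
    have := j.2
    omega
  have hsub : s.Sublist l := ((List.take_sublist _ _).trans (List.drop_sublist _ _))
  have hle : (s : Multiset G) ≤ S := by
    rw [← hlS]
    exact Multiset.coe_le.mpr hsub.subperm
  have hne0 : (s : Multiset G) ≠ 0 := by
    simp only [ne_eq, Multiset.coe_eq_zero]
    intro hnil
    have := hslen
    rw [hnil] at this
    simp at this
    omega
  have hneS : (s : Multiset G) ≠ S := by
    intro hEq
    have : Multiset.card (s : Multiset G) = Multiset.card S := by rw [hEq]
    simp only [Multiset.coe_card] at this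
    have := j.2
    omega
  exact hS.2.2 _ hle hne0 hneS (by simpa using hsum)

lemma le_Dav [Fintype G] {S : Multiset G} (hS : IsMinZeroSum S) :
    Multiset.card S ≤ Dav G := by
  apply le_csSup
  · refine ⟨Fintype.card G, ?_⟩
    rintro n ⟨T, hT, rfl⟩
    exact minzero_card_le hT
  · exact ⟨S, hS, rfl⟩

lemma pair_min {g : G} (hg : g ≠ 0) : IsMinZeroSum (g ::ₘ ({-g} : Multiset G)) := by
  refine ⟨by simp, by simp, ?_⟩
  intro T hT hT0 hTS hsum
  have hcT := Multiset.card_le_card hT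
  simp only [Multiset.card_cons, Multiset.card_singleton] at hcT
  have h1 : Multiset.card T ≠ 0 := by simpa [Multiset.card_eq_zero] using hT0
  have h2 : Multiset.card T ≠ 2 := by
    intro h2
    exact hTS (Multiset.eq_of_le_of_card_le hT (by simp [h2]))
  have : Multiset.card T = 1 := by omega
  obtain ⟨x, rfl⟩ := Multiset.card_eq_one.mp this
  have hx : x ∈ (g ::ₘ ({-g} : Multiset G)) := Multiset.mem_of_le hT (by simp)
  simp only [Multiset.mem_cons, Multiset.mem_singleton] at hx
  rcases hx with rfl | rfl
  · exact hg (by simpa using hsum)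
  · exact hg (by simpa using hsum)

lemma rep_min {g : G} (hg : 0 < addOrderOf g) :
    IsMinZeroSum (Multiset.replicate (addOrderOf g) g) := by
  refine ⟨?_, ?_, ?_⟩
  · intro h
    have := congrArg Multiset.card h
    simp only [Multiset.card_replicate, Multiset.card_zero] at this
    omega
  · rw [Multiset.sum_replicate]
    exact addOrderOf_nsmul_eq_zero g
  · intro T hT hT0 hTS hsum
    have hrep : T = Multiset.replicate (Multiset.card T) g :=
      Multiset.eq_replicate_card.mpr
        (fun x hx => Multiset.eq_of_mem_replicate (Multiset.mem_of_le hT hx))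
    have hsum' : Multiset.card T • g = 0 := by
      rw [← Multiset.sum_replicate, ← hrep, hsum]
    have hdvd : addOrderOf g ∣ Multiset.card T := addOrderOf_dvd_of_nsmul_eq_zero hsum'
    have hle := Multiset.card_le_card hT
    simp only [Multiset.card_replicate] at hle
    have hne : Multiset.card T ≠ 0 := by simpa [Multiset.card_eq_zero] using hT0
    have : addOrderOf g ≤ Multiset.card T := Nat.le_of_dvd (by omega) hdvd
    have hEq : Multiset.card T = addOrderOf g := by omega
    exact hTS (by rw [hrep, hEq])

lemma neg_min {S : Multiset G} (hS : IsMinZeroSum S) :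
    IsMinZeroSum (S.map (fun x => -x)) := by
  have hmap : ∀ T : Multiset G, (T.map (fun x : G => -x)).map (fun x : G => -x) = T := by
    intro T
    rw [Multiset.map_map]
    simp
  refine ⟨by simpa [Multiset.map_eq_zero] using hS.1, ?_, ?_⟩
  · rw [Multiset.sum_map_neg', hS.2.1, neg_zero]
  · intro T hT hT0 hTS hsum
    have hle : T.map (fun x : G => -x) ≤ S := by
      have := Multiset.map_le_map (f := fun x : G => -x) hT
      rwa [hmap] at this
    have h0 : T.map (fun x : G => -x) ≠ 0 := by
      simpa [Multiset.map_eq_zero] using hT0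
    have hne : T.map (fun x : G => -x) ≠ S := by
      intro hEq
      apply hTS
      rw [← hmap T, hEq]
    exact hS.2.2 _ hle h0 hne (by rw [Multiset.sum_map_neg', hsum, neg_zero])

lemma exists_decomp {W A B : Multiset G} (h : W ≤ A + B) :
    ∃ A' B', A' ≤ A ∧ B' ≤ B ∧ W = A' + B' := by
  classical
  refine ⟨W ∩ A, W - A, Multiset.inter_le_right, ?_, ?_⟩
  · rw [Multiset.sub_le_iff_le_add]
    rwa [add_comm] at h
  · ext a
    have := Multiset.count_le_of_le a h
    simp only [Multiset.count_add, Multiset.count_inter, Multiset.count_sub] at *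
    omega

end Aux

lemma nat_combo {d e : ℕ} (h : Nat.gcd d e = 1) :
    (∃ a b : ℕ, a * d = 1 + b * e) ∨ (∃ a b : ℕ, a * e = 1 + b * d) := by
  rcases Nat.eq_zero_or_pos d with hd | hd
  · right
    subst hd
    simp at h
    exact ⟨1, 0, by omega⟩
  rcases Nat.eq_zero_or_pos e with he | he
  · left
    subst he
    simp at h
    exact ⟨1, 0, by omega⟩
  · left
    have hb : (d : ℤ) * Nat.gcdA d e + (e : ℤ) * Nat.gcdB d e = 1 := by
      rw [← Nat.gcd_eq_gcd_ab, h]; norm_num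
    set x := Nat.gcdA d e
    set y := Nat.gcdB d e
    set t : ℤ := |x| + |y| + 1 with ht
    have hxt : 0 ≤ x + t * e := by
      have : (1 : ℤ) ≤ e := by exact_mod_cast he
      nlinarith [abs_nonneg x, abs_nonneg y, le_abs_self x, neg_abs_le x]
    have hyt : 0 ≤ t * d - y := by
      have : (1 : ℤ) ≤ d := by exact_mod_cast hd
      nlinarith [abs_nonneg x, abs_nonneg y, le_abs_self y, neg_abs_le y]
    refine ⟨(x + t * e).toNat, (t * d - y).toNat, ?_⟩
    have h1 : ((x + t * e).toNat : ℤ) = x + t * e := Int.toNat_of_nonneg hxt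
    have h2 : ((t * d - y).toNat : ℤ) = t * d - y := Int.toNat_of_nonneg hyt
    have : ((x + t * e).toNat : ℤ) * d = 1 + ((t * d - y).toNat : ℤ) * e := by
      rw [h1, h2]
      ring_nf
      nlinarith [hb]
    exact_mod_cast this

section Key

variable {G : Type*} [AddCommGroup G] [Fintype G]

/-- Key ingredient: a minimal zero-sum sequence of maximal length over a p-group
contains an element of order `exp G`. -/
lemma key_ingredient (p : ℕ) (hp : p.Prime)
    (hpgroup : ∀ g : G, ∃ n : ℕ, p ^ n • g = 0)
    (hexp2 : 2 ≤ AddMonoid.exponent G)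
    {U : Multiset G} (hU : IsMinZeroSum U) (hlen : Multiset.card U = Dav G) :
    ∃ g ∈ U, addOrderOf g = AddMonoid.exponent G := by
  classical
  -- the exponent is a power of p
  set N : ℕ := Finset.univ.sup (fun g : G => Nat.find (hpgroup g)) with hN
  have hdvdN : AddMonoid.exponent G ∣ p ^ N := by
    apply AddMonoid.exponent_dvd_of_forall_nsmul_eq_zero
    intro g
    have h1 : p ^ (Nat.find (hpgroup g)) • g = 0 := Nat.find_spec (hpgroup g)
    have h2 : Nat.find (hpgroup g) ≤ N := Finset.le_sup (f := fun g : G => Nat.find (hpgroup g)) (Finset.mem_univ g)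
    have h3 : p ^ N = p ^ (N - Nat.find (hpgroup g)) * p ^ (Nat.find (hpgroup g)) := by
      rw [← pow_add, Nat.sub_add_cancel h2]
    calc p ^ N • g = (p ^ (N - Nat.find (hpgroup g)) * p ^ (Nat.find (hpgroup g))) • g := by
          rw [h3]
      _ = p ^ (N - Nat.find (hpgroup g)) • (p ^ (Nat.find (hpgroup g)) • g) := mul_smul _ _ _
      _ = 0 := by rw [h1, smul_zero]
  obtain ⟨k, hk, hexpk⟩ := (Nat.dvd_prime_pow hp).mp hdvdN
  have hk1 : 1 ≤ k := by
    by_contra hk0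
    interval_cases k
    simp at hexpk
    omega
  by_contra hcon
  push_neg at hcon
  -- every element of U lies in H = {x | p^(k-1) • x = 0}
  have hUH : ∀ u ∈ U, p ^ (k - 1) • u = 0 := by
    intro u hu
    have hdvd : addOrderOf u ∣ p ^ k := by
      rw [← hexpk]; exact AddMonoid.addOrder_dvd_exponent u
    obtain ⟨m, hm, hordm⟩ := (Nat.dvd_prime_pow hp).mp hdvd
    have hmk : m ≠ k := by
      intro hmk
      exact hcon u hu (by rw [hordm, hmk, hexpk])
    apply addOrderOf_dvd_iff_nsmul_eq_zero.mp
    rw [hordm]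
    exact pow_dvd_pow p (by omega)
  -- an element of maximal order
  obtain ⟨g, hg⟩ := AddMonoid.exists_addOrderOf_eq_exponent
    (AddMonoid.ExponentExists.of_finite (G := G))
  have hgk : addOrderOf g = p ^ k := by rw [hg, hexpk]
  have hgH : ¬ p ^ (k - 1) • g = 0 := by
    intro h0
    have : p ^ k ∣ p ^ (k - 1) := hgk ▸ addOrderOf_dvd_of_nsmul_eq_zero h0
    have := Nat.le_of_dvd (pow_pos hp.pos _) this
    have := Nat.pow_lt_pow_right hp.one_lt (show k - 1 < k by omega)
    omega
  -- the subgroup H and the quotient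
  set H : AddSubgroup G :=
    { carrier := {x : G | p ^ (k - 1) • x = 0}
      zero_mem' := smul_zero _
      add_mem' := by
        intro a b ha hb
        simp only [Set.mem_setOf_eq] at *
        rw [smul_add, ha, hb, add_zero]
      neg_mem' := by
        intro a ha
        simp only [Set.mem_setOf_eq] at *
        rw [smul_neg, ha, neg_zero] } with hHdef
  have hmemH : ∀ x : G, x ∈ H ↔ p ^ (k - 1) • x = 0 := fun x => Iff.rfl
  set π : G →+ G ⧸ H := QuotientAddGroup.mk' H with hπ
  have hπ0 : ∀ x : G, π x = 0 ↔ x ∈ H := fun x => QuotientAddGroup.eq_zero_iff x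
  have hπg : π g ≠ 0 := by
    intro h
    exact hgH ((hmemH g).mp ((hπ0 g).mp h))
  have hpgH : p • g ∈ H := by
    rw [hmemH, smul_smul, ← pow_succ]
    have hkk : (k - 1) + 1 = k := by omega
    rw [hkk, ← hgk]
    exact addOrderOf_nsmul_eq_zero g
  have hpπg : p • (π g) = 0 := by
    rw [← map_nsmul]
    exact (hπ0 _).mpr hpgH
  have hordπ : addOrderOf (π g) = p := by
    have hdvd : addOrderOf (π g) ∣ p := addOrderOf_dvd_of_nsmul_eq_zero hpπg
    rcases hp.eq_one_or_self_of_dvd _ hdvd with h1 | h1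
    · exact absurd (AddMonoid.addOrderOf_eq_one_iff.mp h1) hπg
    · exact h1
  -- build a longer minimal zero-sum sequence
  obtain ⟨u0, hu0⟩ := Multiset.exists_mem_of_ne_zero hU.1
  set T : Multiset G := Multiset.replicate (p - 1) g + {u0 - (p - 1) • g} with hT
  have hcardT : Multiset.card T = p := by
    rw [hT]
    simp only [Multiset.card_add, Multiset.card_replicate, Multiset.card_singleton]
    have := hp.pos
    omega
  have hsumT : T.sum = u0 := by
    rw [hT]
    simp [Multiset.sum_replicate]
  have hπT : ∀ x ∈ T, π x = π g := by
    intro x hx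
    rw [hT] at hx
    simp only [Multiset.mem_add, Multiset.mem_singleton] at hx
    rcases hx with hx | rfl
    · rw [Multiset.eq_of_mem_replicate hx]
    · have hπu0 : π u0 = 0 := (hπ0 _).mpr ((hmemH u0).mpr (hUH u0 hu0))
      have hp1 : (p - 1) • (π g) = - π g := by
        have : (p - 1) • (π g) + π g = 0 := by
          rw [← succ_nsmul]
          have hppos := hp.pos
          have : (p - 1) + 1 = p := by omega
          rw [this]
          exact hpπg
        linear_combination (norm := abel) this
      rw [map_sub, map_nsmul, hπu0, hp1]
      abel
  set W : Multiset G := U.erase u0 + T with hW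
  have hUerase : u0 ::ₘ U.erase u0 = U := Multiset.cons_erase hu0
  have hsumerase : u0 + (U.erase u0).sum = 0 := by
    rw [← Multiset.sum_cons, hUerase, hU.2.1]
  have hWmin : IsMinZeroSum W := by
    refine ⟨?_, ?_, ?_⟩
    · intro h0
      have := congrArg Multiset.card h0
      simp only [hW, Multiset.card_add, hcardT, Multiset.card_zero] at this
      have := hp.pos
      omega
    · rw [hW, Multiset.sum_add, hsumT]
      linear_combination (norm := abel) hsumerase
    · intro T' hle hne0 hneW hsum0
      obtain ⟨S0, T0, hS0, hT0, rfl⟩ := exists_decomp hle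
      -- project to the quotient
      have hπsum : ((S0 + T0).map (⇑π)).sum = 0 := by
        rw [← map_multiset_sum, hsum0, map_zero]
      have hS0sum : (S0.map (⇑π)).sum = 0 := by
        apply Multiset.sum_eq_zero
        intro y hy
        obtain ⟨x, hx, rfl⟩ := Multiset.mem_map.mp hy
        have hxU : x ∈ U := Multiset.mem_of_le (Multiset.erase_le u0 U) (Multiset.mem_of_le hS0 hx)
        exact (hπ0 _).mpr ((hmemH x).mpr (hUH x hxU))
      have hT0rep : T0.map (⇑π) = Multiset.replicate (Multiset.card T0) (π g) := by
        apply Multiset.eq_replicate.mpr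
        constructor
        · simp
        · intro y hy
          obtain ⟨x, hx, rfl⟩ := Multiset.mem_map.mp hy
          exact hπT x (Multiset.mem_of_le hT0 hx)
      have hT0smul : Multiset.card T0 • (π g) = 0 := by
        have h' : (S0.map (⇑π)).sum + (T0.map (⇑π)).sum = 0 := by
          rw [← Multiset.sum_add, ← Multiset.map_add]
          exact hπsum
        rwa [hS0sum, zero_add, hT0rep, Multiset.sum_replicate] at h'
      have hdvd : p ∣ Multiset.card T0 := by
        rw [← hordπ]
        exact addOrderOf_dvd_of_nsmul_eq_zero hT0smul
      have hcardle : Multiset.card T0 ≤ p := by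
        have := Multiset.card_le_card hT0
        omega
      rcases Nat.eq_zero_or_pos (Multiset.card T0) with hc0 | hcpos
      · -- T0 empty : S0 is a proper zero-sum subsequence of U
        have hT00 : T0 = 0 := Multiset.card_eq_zero.mp hc0
        subst hT00
        have hsum0' : S0.sum = 0 := by simpa using hsum0
        have hne0' : S0 ≠ 0 := by simpa using hne0
        have hS0U : S0 ≤ U := hS0.trans (Multiset.erase_le u0 U)
        have hS0ne : S0 ≠ U := by
          intro h
          have h1 := Multiset.card_le_card hS0
          have h2 : Multiset.card (U.erase u0) = Multiset.card U - 1 := by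
            rw [Multiset.card_erase_of_mem hu0, Nat.pred_eq_sub_one]
          have h3 : 1 ≤ Multiset.card U := by
            by_contra hh
            exact hU.1 (Multiset.card_eq_zero.mp (by omega))
          rw [h] at h1
          omega
        exact hU.2.2 S0 hS0U hne0' hS0ne hsum0'
      · -- T0 = T
        have hcardeq : Multiset.card T0 = p := by
          have := Nat.le_of_dvd hcpos hdvd
          omega
        have hT0T : T0 = T := Multiset.eq_of_le_of_card_le hT0 (by omega)
        subst hT0T
        have hsum1 : (u0 ::ₘ S0).sum = 0 := by
          rw [Multiset.sum_cons]
          rw [Multiset.sum_add, hsumT] at hsum0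
          linear_combination (norm := abel) hsum0
        have hle1 : u0 ::ₘ S0 ≤ U := by
          rw [← hUerase]
          exact Multiset.cons_le_cons u0 hS0
        have heq1 : u0 ::ₘ S0 = U := by
          by_contra hne1
          exact hU.2.2 _ hle1 (Multiset.cons_ne_zero) hne1 hsum1
        have hS0eq : S0 = U.erase u0 := by
          have : u0 ::ₘ S0 = u0 ::ₘ U.erase u0 := by rw [heq1, hUerase]
          exact (Multiset.cons_inj_right u0).mp this
        exact hneW (by rw [hS0eq, hW])
  -- contradiction with maximality of Dav
  have hcardW := le_Dav hWmin
  have hcardW' : Multiset.card W = (Multiset.card U - 1) + p := by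
    rw [hW, Multiset.card_add, hcardT, Multiset.card_erase_of_mem hu0, Nat.pred_eq_sub_one]
  have h1 : 1 ≤ Multiset.card U := by
    by_contra hh
    exact hU.1 (Multiset.card_eq_zero.mp (by omega))
  have := hp.two_le
  omega

end Key

section Glue

variable {G : Type*} [AddCommGroup G]

lemma glue {U : Multiset G} (L R : List (Multiset G)) (h0 : L ≠ [])
    (hlenLR : R.length = L.length + 1) (hsum : L.sum = R.sum)
    (hL : ∀ S ∈ L, IsMinZeroSum S ∧ ∀ x ∈ S, x ∈ U ∨ -x ∈ U)
    (hR : ∀ S ∈ R, IsMinZeroSum S ∧ ∀ x ∈ S, x ∈ U ∨ -x ∈ U) :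
    ∃ (k : ℕ), 0 < k ∧ ∃ (Us : Fin k → Multiset G) (Vs : Fin (k + 1) → Multiset G),
      (∀ i, IsMinZeroSum (Us i) ∧ ∀ x ∈ Us i, x ∈ U ∨ -x ∈ U) ∧
      (∀ j, IsMinZeroSum (Vs j) ∧ ∀ x ∈ Vs j, x ∈ U ∨ -x ∈ U) ∧
      (∑ i, Us i) = (∑ j, Vs j) := by
  refine ⟨L.length, List.length_pos_iff.mpr h0, fun i => L.get i,
    fun j => R.get (Fin.cast hlenLR.symm j),
    fun i => hL _ (L.get_mem _), fun j => hR _ (R.get_mem _), ?_⟩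
  have h1 : ∑ i : Fin L.length, L.get i = L.sum := by
    simpa [List.get_eq_getElem] using Fin.sum_univ_getElem L
  have h2 : ∑ j : Fin (L.length + 1), R.get (Fin.cast hlenLR.symm j) = R.sum := by
    rw [← Fin.sum_univ_getElem R]
    exact Fintype.sum_bijective (finCongr hlenLR.symm) (finCongr hlenLR.symm).bijective _ _
      (fun j => by simp [List.get_eq_getElem, finCongr_apply])
  rw [h1, h2, hsum]

end Glue

theorem stmt_9 {G : Type*} [AddCommGroup G] [Fintype G] (p : ℕ) (hp : p.Prime)
    (hpgroup : ∀ g : G, ∃ n : ℕ, p ^ n • g = 0)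
    (hnoncyc : ¬ IsAddCyclic G)
    (hgcd : Nat.gcd (AddMonoid.exponent G - 2) (Dav G - 2) = 1)
    (U : Multiset G) (hU : IsMinZeroSum U) (hlen : Multiset.card U = Dav G) :
    ∃ (k : ℕ), 0 < k ∧ ∃ (Us : Fin k → Multiset G) (Vs : Fin (k + 1) → Multiset G),
      (∀ i, IsMinZeroSum (Us i) ∧ ∀ x ∈ Us i, x ∈ U ∨ -x ∈ U) ∧
      (∀ j, IsMinZeroSum (Vs j) ∧ ∀ x ∈ Vs j, x ∈ U ∨ -x ∈ U) ∧
      (∑ i, Us i) = (∑ j, Vs j) := by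
  classical
  have hnontriv : Nontrivial G := Nontrivial.of_not_isAddCyclic hnoncyc
  have hexp0 : AddMonoid.exponent G ≠ 0 :=
    (AddMonoid.ExponentExists.of_finite (G := G)).exponent_ne_zero
  have hexp1 : AddMonoid.exponent G ≠ 1 := by
    intro h
    obtain ⟨x, y, hxy⟩ := exists_pair_ne G
    apply hxy
    have hx := AddMonoid.exponent_nsmul_eq_zero x
    have hy := AddMonoid.exponent_nsmul_eq_zero y
    rw [h, one_nsmul] at hx hy
    rw [hx, hy]
  have hexp2 : 2 ≤ AddMonoid.exponent G := by omega
  obtain ⟨g0, hg0⟩ := exists_ne (0 : G)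
  have hD2 : 2 ≤ Dav G := by
    have := le_Dav (pair_min hg0)
    simpa using this
  have hUnz : ∀ u ∈ U, u ≠ 0 := by
    intro u hu h0
    have h1 : ({u} : Multiset G) ≤ U := Multiset.singleton_le.mpr hu
    have h2 : ({u} : Multiset G) ≠ U := by
      intro h
      rw [← h] at hlen
      simp only [Multiset.card_singleton] at hlen
      omega
    exact hU.2.2 {u} h1 (by simp) h2 (by simp [h0])
  obtain ⟨g, hgU, hgord⟩ := key_ingredient p hp hpgroup hexp2 hU hlen
  set n := AddMonoid.exponent G with hn
  set D := Dav G with hD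
  -- basic sequences
  set A : Multiset G := Multiset.replicate n g with hA
  set B : Multiset G := Multiset.replicate n (-g) with hB
  set Wg : Multiset G := g ::ₘ ({-g} : Multiset G) with hWg
  set negU : Multiset G := U.map (fun x => -x) with hnegU
  set pairs : List (Multiset G) := U.toList.map (fun u => u ::ₘ ({-u} : Multiset G)) with hpairs
  have hminA : IsMinZeroSum A := by
    have := rep_min (g := g) (by rw [hgord]; omega)
    rwa [hgord] at this
  have hminB : IsMinZeroSum B := by
    have := rep_min (g := -g) (by rw [addOrderOf_neg, hgord]; omega)
    rwa [addOrderOf_neg, hgord] at this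
  have propA : IsMinZeroSum A ∧ ∀ x ∈ A, x ∈ U ∨ -x ∈ U := by
    refine ⟨hminA, fun x hx => Or.inl ?_⟩
    have hx' : x = g := Multiset.eq_of_mem_replicate (by rwa [hA] at hx)
    rwa [hx']
  have propB : IsMinZeroSum B ∧ ∀ x ∈ B, x ∈ U ∨ -x ∈ U := by
    refine ⟨hminB, fun x hx => Or.inr ?_⟩
    have hx' : x = -g := Multiset.eq_of_mem_replicate (by rwa [hB] at hx)
    rw [hx', neg_neg]
    exact hgU
  have propWg : IsMinZeroSum Wg ∧ ∀ x ∈ Wg, x ∈ U ∨ -x ∈ U := by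
    refine ⟨pair_min (hUnz g hgU), fun x hx => ?_⟩
    rw [hWg] at hx
    simp only [Multiset.mem_cons, Multiset.mem_singleton] at hx
    rcases hx with rfl | rfl
    · exact Or.inl hgU
    · exact Or.inr (by simpa using hgU)
  have propU : IsMinZeroSum U ∧ ∀ x ∈ U, x ∈ U ∨ -x ∈ U := ⟨hU, fun x hx => Or.inl hx⟩
  have propnegU : IsMinZeroSum negU ∧ ∀ x ∈ negU, x ∈ U ∨ -x ∈ U := by
    refine ⟨neg_min hU, fun x hx => ?_⟩
    rw [hnegU] at hx
    obtain ⟨u, hu, rfl⟩ := Multiset.mem_map.mp hx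
    exact Or.inr (by simpa using hu)
  have proppairs : ∀ S ∈ pairs, IsMinZeroSum S ∧ ∀ x ∈ S, x ∈ U ∨ -x ∈ U := by
    intro S hS
    rw [hpairs] at hS
    obtain ⟨u, hu, rfl⟩ := List.mem_map.mp hS
    have huU : u ∈ U := Multiset.mem_toList.mp hu
    refine ⟨pair_min (hUnz u huU), fun x hx => ?_⟩
    simp only [Multiset.mem_cons, Multiset.mem_singleton] at hx
    rcases hx with rfl | rfl
    · exact Or.inl huU
    · exact Or.inr (by simpa using huU)
  -- length and sum facts
  have hpairslen : pairs.length = D := by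
    rw [hpairs, List.length_map, Multiset.length_toList, hlen]
  have hpairssum : pairs.sum = U + negU := by
    have h1 : pairs.sum = (Multiset.map (fun u => u ::ₘ ({-u} : Multiset G)) U).sum := by
      conv_rhs => rw [← Multiset.coe_toList U]
      rw [Multiset.map_coe, Multiset.sum_coe]
    rw [h1]
    have h2 : (fun u : G => u ::ₘ ({-u} : Multiset G))
        = fun u : G => ({u} : Multiset G) + {-u} := by
      funext u
      rw [Multiset.singleton_add]
    rw [h2, Multiset.sum_map_add, Multiset.sum_map_singleton]
    congr 1
    rw [show (fun u : G => ({-u} : Multiset G))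
      = (fun v : G => ({v} : Multiset G)) ∘ (fun u : G => -u) from rfl,
      ← Multiset.map_map, Multiset.sum_map_singleton]
  have hnWg : n • Wg = A + B := by
    rw [hWg, ← Multiset.singleton_add, smul_add, Multiset.nsmul_singleton,
      Multiset.nsmul_singleton]
  obtain ⟨d', hd'⟩ : ∃ d', n = d' + 2 := ⟨n - 2, by omega⟩
  obtain ⟨e', he'⟩ : ∃ e', D = e' + 2 := ⟨D - 2, by omega⟩
  have hsub1 : n - 2 = d' := by omega
  have hsub2 : D - 2 = e' := by omega
  rcases nat_combo hgcd with ⟨a, b, hab⟩ | ⟨a, b, hab⟩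
  · -- a * (n-2) = 1 + b * (D-2)
    rw [hsub1, hsub2] at hab
    have ha1 : 1 ≤ a := by
      rcases Nat.eq_zero_or_pos a with rfl | h
      · simp only [Nat.zero_mul] at hab
        generalize b * e' = c at hab
        omega
      · exact h
    set L : List (Multiset G) :=
      List.replicate a A ++ List.replicate a B ++ (List.replicate b pairs).flatten with hL
    set R : List (Multiset G) :=
      List.replicate (a * n) Wg ++ (List.replicate b U ++ List.replicate b negU) with hR
    have hLlen : L.length = a + a + b * D := by
      rw [hL]
      simp only [List.length_append, List.length_replicate, List.length_flatten,
        List.map_replicate, List.sum_replicate, smul_eq_mul, hpairslen]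
    have hRlen : R.length = (a + a + b * D) + 1 := by
      rw [hR]
      simp only [List.length_append, List.length_replicate]
      rw [hd', he']
      have h1 : a * (d' + 2) = a * d' + (a + a) := by ring
      have h2 : b * (e' + 2) = b * e' + (b + b) := by ring
      rw [h1, h2, hab]
      ring
    apply glue L R ?_ (by rw [hRlen, hLlen]) ?_ ?_ ?_
    · apply List.ne_nil_of_length_pos
      rw [hLlen]
      exact lt_of_lt_of_le (by omega) (Nat.le_add_right _ _)
    · rw [hL, hR]
      simp only [List.sum_append, List.sum_replicate, List.sum_flatten, List.map_replicate]
      rw [hpairssum, mul_smul, hnWg]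
      rw [smul_add, smul_add]
    · intro S hS
      rw [hL] at hS
      simp only [List.mem_append, List.mem_replicate, List.mem_flatten] at hS
      rcases hS with (⟨-, rfl⟩ | ⟨-, rfl⟩) | ⟨l, ⟨-, rfl⟩, hSl⟩
      · exact propA
      · exact propB
      · exact proppairs S hSl
    · intro S hS
      rw [hR] at hS
      simp only [List.mem_append, List.mem_replicate] at hS
      rcases hS with ⟨-, rfl⟩ | (⟨-, rfl⟩ | ⟨-, rfl⟩)
      · exact propWg
      · exact propU
      · exact propnegU
  · -- a * (D-2) = 1 + b * (n-2)
    rw [hsub1, hsub2] at hab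
    have ha1 : 1 ≤ a := by
      rcases Nat.eq_zero_or_pos a with rfl | h
      · simp only [Nat.zero_mul] at hab
        generalize b * d' = c at hab
        omega
      · exact h
    set L : List (Multiset G) :=
      List.replicate a U ++ List.replicate a negU ++ List.replicate (b * n) Wg with hL
    set R : List (Multiset G) :=
      (List.replicate a pairs).flatten ++ (List.replicate b A ++ List.replicate b B) with hR
    have hLlen : L.length = a + a + b * n := by
      rw [hL]
      simp only [List.length_append, List.length_replicate]
    have hRlen : R.length = (a + a + b * n) + 1 := by
      rw [hR]
      simp only [List.length_append, List.length_replicate, List.length_flatten,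
        List.map_replicate, List.sum_replicate, smul_eq_mul, hpairslen]
      rw [hd', he']
      have h1 : a * (e' + 2) = a * e' + (a + a) := by ring
      have h2 : b * (d' + 2) = b * d' + (b + b) := by ring
      rw [h1, h2, hab]
      ring
    apply glue L R ?_ (by rw [hRlen, hLlen]) ?_ ?_ ?_
    · apply List.ne_nil_of_length_pos
      rw [hLlen]
      exact lt_of_lt_of_le (by omega) (Nat.le_add_right _ _)
    · rw [hL, hR]
      simp only [List.sum_append, List.sum_replicate, List.sum_flatten, List.map_replicate]
      rw [hpairssum, mul_smul, hnWg]
      rw [smul_add, smul_add]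
    · intro S hS
      rw [hL] at hS
      simp only [List.mem_append, List.mem_replicate] at hS
      rcases hS with (⟨-, rfl⟩ | ⟨-, rfl⟩) | ⟨-, rfl⟩
      · exact propU
      · exact propnegU
      · exact propWg
    · intro S hS
      rw [hR] at hS
      simp only [List.mem_append, List.mem_replicate, List.mem_flatten] at hS
      rcases hS with ⟨l, ⟨-, rfl⟩, hSl⟩ | (⟨-, rfl⟩ | ⟨-, rfl⟩)
      · exact proppairs S hSl
      · exact propA
      · exact propB
end

section
/- Let G be a finite abelian group, and let g_1, …, g_t, h ∈ G with (g_1,…,g_t) independent, t ≥ 1, each ord(g_i) ≥ 2, and suppose p·h = k_1 g_1 + ⋯ + k_t g_t where p is the minimal positive integer with p·h ∈ ⟨g_1,…,g_t⟩ and k_i ∈ [1, ord(g_i) − 1]. Then h^p g_1^{ord(g_1) − k_1} ⋯ g_t^{ord(g_t) − k_t} is a minimal zero-sum sequence over G. -/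
private lemma msplit {α : Type*} {A B T : Multiset α} (hT : T ≤ A + B) :
    ∃ T₁ T₂, T₁ ≤ A ∧ T₂ ≤ B ∧ T = T₁ + T₂ := by
  classical
  refine ⟨T ⊓ A, T - A, inf_le_right, tsub_le_iff_left.mpr hT, ?_⟩
  ext x
  have := Multiset.count_le_of_le x hT
  simp only [Multiset.count_add] at this ⊢
  rw [Multiset.inf_eq_inter, Multiset.count_inter, Multiset.count_sub]
  omega

private lemma sum_of_finsum {α ι : Type*} [AddCommMonoid α] (s : Finset ι)
    (f : ι → Multiset α) : (∑ i ∈ s, f i).sum = ∑ i ∈ s, (f i).sum := by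
  classical
  induction s using Finset.induction_on with
  | empty => simp
  | insert _ _ hx ih => simp [Finset.sum_insert hx, ih]

private lemma msum_split {α ι : Type*} [DecidableEq ι] (s : Finset ι) (n : ι → ℕ) (g : ι → α)
    (T : Multiset α) (hT : T ≤ ∑ i ∈ s, Multiset.replicate (n i) (g i)) :
    ∃ a : ι → ℕ, (∀ i, a i ≤ n i) ∧ (∀ i ∉ s, a i = 0) ∧
      T = ∑ i ∈ s, Multiset.replicate (a i) (g i) := by
  induction s using Finset.induction_on generalizing T with
  | empty =>
    simp only [Finset.sum_empty, Multiset.le_zero] at hT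
    exact ⟨fun _ => 0, fun _ => Nat.zero_le _, fun _ _ => rfl, by simp [hT]⟩
  | @insert x s hx ih =>
    rw [Finset.sum_insert hx] at hT
    obtain ⟨T₁, T₂, h1, h2, rfl⟩ := msplit hT
    obtain ⟨q, hq, rfl⟩ := Multiset.le_replicate_iff.mp h1
    obtain ⟨a, ha, ha0, rfl⟩ := ih T₂ h2
    refine ⟨Function.update a x q, ?_, ?_, ?_⟩
    · intro i
      rcases eq_or_ne i x with rfl | hix
      · simpa using hq
      · simpa [Function.update_of_ne hix] using ha i
    · intro i hi
      have hix : i ≠ x := by rintro rfl; exact hi (Finset.mem_insert_self _ _)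
      rw [Function.update_of_ne hix]
      exact ha0 i fun hmem => hi (Finset.mem_insert_of_mem hmem)
    · rw [Finset.sum_insert hx, Function.update_self]
      congr 1
      exact Finset.sum_congr rfl fun i hi => by
        rw [Function.update_of_ne (by rintro rfl; exact hx hi)]

theorem stmt_18 {G : Type*} [AddCommGroup G] [Fintype G] (t : ℕ) (ht : 1 ≤ t)
    (g : Fin t → G) (hne : ∀ i, g i ≠ 0)
    (hindep : ∀ m : Fin t → ℤ, (∑ i, m i • g i) = 0 → ∀ i, m i • g i = 0)
    (hord : ∀ i, 2 ≤ addOrderOf (g i))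
    (h : G) (p : ℕ) (hp : 0 < p)
    (hmem : p • h ∈ AddSubgroup.closure (Set.range g))
    (hmin : ∀ q : ℕ, 0 < q → q • h ∈ AddSubgroup.closure (Set.range g) → p ≤ q)
    (k : Fin t → ℕ) (hk : ∀ i, 1 ≤ k i ∧ k i ≤ addOrderOf (g i) - 1)
    (heq : p • h = ∑ i, (k i) • g i) :
    IsMinZeroSum (Multiset.replicate p h +
      ∑ i, Multiset.replicate (addOrderOf (g i) - k i) (g i)) := by
  have hkord : ∀ i, k i + (addOrderOf (g i) - k i) = addOrderOf (g i) := by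
    intro i
    have := (hk i).2
    have := hord i
    omega
  have hSsum : (Multiset.replicate p h +
      ∑ i, Multiset.replicate (addOrderOf (g i) - k i) (g i)).sum = 0 := by
    rw [Multiset.sum_add, Multiset.sum_replicate, sum_of_finsum, heq, ← Finset.sum_add_distrib]
    have : ∀ i ∈ Finset.univ, k i • g i + (Multiset.replicate (addOrderOf (g i) - k i) (g i)).sum
        = 0 := by
      intro i _
      rw [Multiset.sum_replicate, ← add_nsmul, hkord i, addOrderOf_nsmul_eq_zero]
    rw [Finset.sum_congr rfl this, Finset.sum_const_zero]
  refine ⟨?_, hSsum, ?_⟩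
  · intro h0
    have := congrArg Multiset.card h0
    simp [Multiset.card_replicate] at this
    omega
  · intro T hTle hT0 hTS hTsum
    obtain ⟨T₁, T₂, h1, h2, rfl⟩ := msplit hTle
    obtain ⟨q, hq, rfl⟩ := Multiset.le_replicate_iff.mp h1
    obtain ⟨a, ha, -, rfl⟩ := msum_split Finset.univ _ g T₂ h2
    rw [Multiset.sum_add, Multiset.sum_replicate, sum_of_finsum] at hTsum
    simp only [Multiset.sum_replicate] at hTsum
    -- hTsum : q • h + ∑ i, a i • g i = 0
    rcases Nat.eq_zero_or_pos q with rfl | hq0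
    · rw [zero_nsmul, zero_add] at hTsum
      have hzsum : (∑ i, ((a i : ℤ)) • g i) = 0 := by
        rw [← hTsum]; exact Finset.sum_congr rfl fun i _ => natCast_zsmul _ _
      have ha0 : ∀ i, a i = 0 := by
        intro i
        have := hindep _ hzsum i
        rw [natCast_zsmul] at this
        have hdvd := addOrderOf_dvd_of_nsmul_eq_zero this
        have h1 := (hk i).1
        have h2 := (hk i).2
        have h3 := ha i
        rcases Nat.eq_zero_or_pos (a i) with h | h
        · exact h
        · exact absurd (Nat.le_of_dvd h hdvd) (by omega)
      apply hT0
      simp [Multiset.replicate_zero, ha0]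
    · -- q > 0 case
      have hmem2 : q • h ∈ AddSubgroup.closure (Set.range g) := by
        have : q • h = -(∑ i, a i • g i) := by
          rw [eq_neg_iff_add_eq_zero]; exact hTsum
        rw [this]
        exact AddSubgroup.neg_mem _ (AddSubgroup.sum_mem _ fun i _ =>
          AddSubgroup.nsmul_mem _ (AddSubgroup.subset_closure (Set.mem_range_self i)) _)
      have hqp : q = p := le_antisymm hq (hmin q hq0 hmem2)
      subst hqp
      have hsum2 : (∑ i, ((k i + a i : ℕ) : ℤ) • g i) = 0 := by
        have : (∑ i, ((k i + a i : ℕ) : ℤ) • g i) = ∑ i, (k i • g i + a i • g i) := by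
          refine Finset.sum_congr rfl fun i _ => ?_
          rw [natCast_zsmul, add_nsmul]
        rw [this, Finset.sum_add_distrib, ← heq, hTsum]
      have hafull : ∀ i, a i = addOrderOf (g i) - k i := by
        intro i
        have := hindep _ hsum2 i
        rw [natCast_zsmul] at this
        have hdvd := addOrderOf_dvd_of_nsmul_eq_zero this
        have h1 := (hk i).1
        have h2 := (hk i).2
        have h3 := ha i
        have ho := hord i
        have hle : addOrderOf (g i) ≤ k i + a i := Nat.le_of_dvd (by omega) hdvd
        omega
      apply hTS
      congr 1
      exact Finset.sum_congr rfl fun i _ => by rw [hafull i]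
end
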